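/- arXiv:1309.2340 — 2 statements merged into one kernel-verified Lean document; each statement's English description precedes it below -/
import Mathlib

section
/- Let h ∈ hm(ℤ^d) and u, v ∈ ℤ^d. Then the family L_{(u,v)} of sublevel components of h separating u from v is finite and totally ordered by inclusion, and h(v) − h(u) = |L_{(u,v)}| − |L_{(v,u)}|. -/
namespace P3C

def latticeGraph (d : ℕ) : SimpleGraph (Fin d → ℤ) where
  Adj v w := ∃ i, (w i = v i + 1 ∨ w i = v i - 1) ∧ ∀ j, j ≠ i → w j = v j
  symm := ⟨by
    rintro v w ⟨i, h1, h2⟩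
    exact ⟨i, by omega, fun j hj => (h2 j hj).symm⟩⟩
  loopless := ⟨by
    rintro v ⟨i, h1, _⟩
    omega⟩

def vplus (d : ℕ) (U : Set (Fin d → ℤ)) : Set (Fin d → ℤ) :=
  {u | u ∈ U ∨ ∃ w ∈ U, (latticeGraph d).Adj u w}

def vminus (d : ℕ) (U : Set (Fin d → ℤ)) : Set (Fin d → ℤ) :=
  {u | u ∈ U ∧ ∀ w, (latticeGraph d).Adj u w → w ∈ U}

def inBdry (d : ℕ) (U : Set (Fin d → ℤ)) : Set (Fin d → ℤ) := U \ vminus d U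

def outBdry (d : ℕ) (U : Set (Fin d → ℤ)) : Set (Fin d → ℤ) := vplus d U \ U

def ConnectedIn {V : Type*} (G : SimpleGraph V) (S : Set V) : Prop := (G.induce S).Connected

def BiConnected (d : ℕ) (U : Set (Fin d → ℤ)) : Prop :=
  U ≠ ∅ ∧ U ≠ Set.univ ∧ ConnectedIn (latticeGraph d) U ∧ ConnectedIn (latticeGraph d) Uᶜ

def edgeBdry (d : ℕ) (U : Set (Fin d → ℤ)) : Set ((Fin d → ℤ) × (Fin d → ℤ)) :=
  {p | (latticeGraph d).Adj p.1 p.2 ∧ ((p.1 ∈ U ∧ p.2 ∉ U) ∨ (p.2 ∈ U ∧ p.1 ∉ U))}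

def IsFourCycle (d : ℕ) (v00 v01 v11 v10 : Fin d → ℤ) : Prop :=
  (latticeGraph d).Adj v00 v01 ∧ (latticeGraph d).Adj v01 v11 ∧
  (latticeGraph d).Adj v11 v10 ∧ (latticeGraph d).Adj v10 v00 ∧ v00 ≠ v11 ∧ v01 ≠ v10

def BoundaryDisjoint (d : ℕ) (U1 U2 : Set (Fin d → ℤ)) : Prop :=
  edgeBdry d U1 ∩ edgeBdry d U2 = ∅ ∧
  ¬ ∃ v00 v01 v11 v10, IsFourCycle d v00 v01 v11 v10 ∧
    v00 ∈ U1ᶜ ∩ U2ᶜ ∧ v01 ∈ U1ᶜ ∩ U2 ∧ v11 ∈ U1 ∩ U2 ∧ v10 ∈ U1 ∩ U2ᶜ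

def translates (n d : ℕ) (U : Set (Fin d → ℤ)) : Set (Set (Fin d → ℤ)) :=
  {W | ∃ x : Fin d → ℤ, (∀ i, (n : ℤ) ∣ x i) ∧ W = (fun u => u + x) '' U}

def TranslationRespecting (n d : ℕ) (U : Set (Fin d → ℤ)) : Prop :=
  BiConnected d U ∧
  ∀ U1 ∈ translates n d U, ∀ U2 ∈ translates n d U, U1 ≠ U2 → BoundaryDisjoint d U1 U2

def TypeZero (n d : ℕ) (U : Set (Fin d → ℤ)) : Prop :=
  TranslationRespecting n d U ∧ (translates n d U).Nontrivial ∧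
  ∀ A ∈ translates n d U, ∀ B ∈ translates n d U, A ⊆ B ∨ B ⊆ A

noncomputable def setDist (d : ℕ) (A B : Set (Fin d → ℤ)) : ℕ :=
  sInf {k | ∃ a ∈ A, ∃ b ∈ B, (latticeGraph d).dist a b = k}

def IsLatticeHHF (d : ℕ) (h : (Fin d → ℤ) → ℤ) : Prop :=
  ∀ v w, (latticeGraph d).Adj v w → |h v - h w| = 1

def homZeroLattice (d : ℕ) : Set ((Fin d → ℤ) → ℤ) :=
  {h | IsLatticeHHF d h ∧ h 0 = 0}

def IsQP (n d : ℕ) (m : Fin d → ℤ) (h : (Fin d → ℤ) → ℤ) : Prop :=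
  h ∈ homZeroLattice d ∧ ∀ (v : Fin d → ℤ) (i : Fin d), h (v + Pi.single i (n : ℤ)) = h v + m i

def QPset (n d : ℕ) : Set ((Fin d → ℤ) → ℤ) :=
  {h | ∃ m : Fin d → ℤ, (∀ i, (6 : ℤ) ∣ m i ∧ |m i| ≤ (n : ℤ)) ∧ IsQP n d m h}

def compIn {V : Type*} (G : SimpleGraph V) (S : Set V) (u : V) : Set V :=
  {w | ∃ (hu : u ∈ S) (hw : w ∈ S), (G.induce S).Reachable ⟨u, hu⟩ ⟨w, hw⟩}

def subLL (d : ℕ) (h : (Fin d → ℤ) → ℤ) (k : ℤ) (u : Fin d → ℤ) : Set (Fin d → ℤ) :=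
  compIn (latticeGraph d) {w | h w ≠ k + 1} u

def subLC (d : ℕ) (h : (Fin d → ℤ) → ℤ) (k : ℤ) (u v : Fin d → ℤ) : Set (Fin d → ℤ) :=
  (compIn (latticeGraph d) (subLL d h k u)ᶜ v)ᶜ

def IsSublevelComponent (d : ℕ) (h : (Fin d → ℤ) → ℤ) (A : Set (Fin d → ℤ)) : Prop :=
  ∃ u v k, h u ≤ k ∧ k < h v ∧ A = subLC d h k u v

def sepComps (d : ℕ) (h : (Fin d → ℤ) → ℤ) (u v : Fin d → ℤ) : Set (Set (Fin d → ℤ)) :=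
  {A | IsSublevelComponent d h A ∧ u ∈ A ∧ v ∉ A}

def cycleEdge (d : ℕ) (v00 v01 v11 v10 : Fin d → ℤ) (e : (Fin d → ℤ) × (Fin d → ℤ)) : Prop :=
  ({e.1, e.2} : Set (Fin d → ℤ)) = {v00, v01} ∨ ({e.1, e.2} : Set (Fin d → ℤ)) = {v01, v11} ∨
  ({e.1, e.2} : Set (Fin d → ℤ)) = {v11, v10} ∨ ({e.1, e.2} : Set (Fin d → ℤ)) = {v10, v00}

def bdryGraph (d : ℕ) (U : Set (Fin d → ℤ)) : SimpleGraph (Fin d → ℤ) where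
  Adj u v := u ≠ v ∧ ∃ eu ev, eu ∈ edgeBdry d U ∧ ev ∈ edgeBdry d U ∧
    (u = eu.1 ∨ u = eu.2) ∧ (v = ev.1 ∨ v = ev.2) ∧
    ∃ a b c e, IsFourCycle d a b c e ∧ cycleEdge d a b c e eu ∧ cycleEdge d a b c e ev
  symm := ⟨by
    rintro u v ⟨hne, eu, ev, h1, h2, h3, h4, a, b, c, e, hc, hcu, hcv⟩
    exact ⟨hne.symm, ev, eu, h2, h1, h4, h3, a, b, c, e, hc, hcv, hcu⟩⟩
  loopless := ⟨fun u h => h.1 rfl⟩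

/-! Torus definitions -/

def torusAdj (n d : ℕ) (v w : Fin d → ZMod n) : Prop :=
  ∃ i, (w i = v i + 1 ∨ w i = v i - 1) ∧ ∀ j, j ≠ i → w j = v j

def IsProperColoring (n d : ℕ) (f : (Fin d → ZMod n) → Fin 3) : Prop :=
  ∀ v w, torusAdj n d v w → f v ≠ f w

def torusColorings (n d : ℕ) : Set ((Fin d → ZMod n) → Fin 3) :=
  {f | IsProperColoring n d f}

def colZero (n d : ℕ) : Set ((Fin d → ZMod n) → Fin 3) :=
  {f | IsProperColoring n d f ∧ f 0 = 0}

def IsTorusHHF (n d : ℕ) (h : (Fin d → ZMod n) → ℤ) : Prop :=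
  ∀ v w, torusAdj n d v w → |h v - h w| = 1

def torusHomZero (n d : ℕ) : Set ((Fin d → ZMod n) → ℤ) :=
  {h | IsTorusHHF n d h ∧ h 0 = 0}

noncomputable def cp (n d : ℕ) (par : ℕ) (k : Fin 3) (f : (Fin d → ZMod n) → Fin 3) : ℝ :=
  (Nat.card {v : Fin d → ZMod n | (∑ j, (v j).val) % 2 = par ∧ f v = k} : ℝ) /
  (Nat.card {v : Fin d → ZMod n | (∑ j, (v j).val) % 2 = par} : ℝ)

def latticeProj (n d : ℕ) (v : Fin d → ℤ) : Fin d → ZMod n := fun i => (v i : ZMod n)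

def toCol (n d : ℕ) (h : (Fin d → ℤ) → ℤ) (x : Fin d → ZMod n) : Fin 3 :=
  ⟨(h (fun i => ((x i).val : ℤ)) % 3).toNat, by
    have h1 : (0 : ℤ) ≤ h (fun i => ((x i).val : ℤ)) % 3 := Int.emod_nonneg _ (by norm_num)
    have h2 : h (fun i => ((x i).val : ℤ)) % 3 < 3 := Int.emod_lt_of_pos _ (by norm_num)
    omega⟩

end P3C


namespace P3C

open SimpleGraph

variable {V : Type*} {G : SimpleGraph V} {S T : Set V} {u v w x y z : V}

lemma induce_walk_exists {a b : S} (p : (G.induce S).Walk a b) :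
    ∃ q : G.Walk a.1 b.1, ∀ z ∈ q.support, z ∈ S := by
  induction p with
  | nil => exact ⟨.nil, by simp⟩
  | @cons x y c hadj p ih =>
    obtain ⟨q, hq⟩ := ih
    refine ⟨.cons (by exact hadj) q, ?_⟩
    intro z hz
    replace hz : z = x.1 ∨ z ∈ q.support := List.mem_cons.1 hz
    rcases hz with rfl | hz
    · exact x.2
    · exact hq z hz

lemma walk_induce_reachable (q : G.Walk a b) (hq : ∀ z ∈ q.support, z ∈ S) :
    (G.induce S).Reachable ⟨a, hq a q.start_mem_support⟩ ⟨b, hq b q.end_mem_support⟩ := by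
  induction q with
  | nil => rfl
  | @cons x y c hadj p ih =>
    have hy : y ∈ S := hq y (by simp)
    have h1 : (G.induce S).Adj ⟨x, hq x (SimpleGraph.Walk.start_mem_support _)⟩ ⟨y, hy⟩ := by
      simpa using hadj
    exact (h1.reachable).trans (ih (fun z hz => hq z (by
      rw [SimpleGraph.Walk.support_cons]; exact List.mem_cons_of_mem _ hz)))

lemma mem_compIn_iff : w ∈ compIn G S u ↔
    u ∈ S ∧ w ∈ S ∧ ∃ q : G.Walk u w, ∀ z ∈ q.support, z ∈ S := by
  constructor
  · rintro ⟨hu, hw, ⟨p⟩⟩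
    obtain ⟨q, hq⟩ := induce_walk_exists p
    exact ⟨hu, hw, q, hq⟩
  · rintro ⟨hu, hw, q, hq⟩
    exact ⟨hu, hw, walk_induce_reachable q hq⟩


lemma mem_compIn_self (hu : u ∈ S) : u ∈ compIn G S u :=
  mem_compIn_iff.2 ⟨hu, hu, .nil, by simp [hu]⟩

lemma compIn_subset : compIn G S u ⊆ S := fun _ hw => (mem_compIn_iff.1 hw).2.1

lemma compIn_base_mem (hw : w ∈ compIn G S u) : u ∈ S := (mem_compIn_iff.1 hw).1

lemma mem_compIn_symm (hw : w ∈ compIn G S u) : u ∈ compIn G S w := by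
  obtain ⟨hu, hw', q, hq⟩ := mem_compIn_iff.1 hw
  exact mem_compIn_iff.2 ⟨hw', hu, q.reverse, by simpa using hq⟩

lemma mem_compIn_trans (hw : w ∈ compIn G S u) (hx : x ∈ compIn G S w) :
    x ∈ compIn G S u := by
  obtain ⟨hu, hw1, q, hq⟩ := mem_compIn_iff.1 hw
  obtain ⟨_, hx1, r, hr⟩ := mem_compIn_iff.1 hx
  refine mem_compIn_iff.2 ⟨hu, hx1, q.append r, ?_⟩
  intro z hz
  rcases (SimpleGraph.Walk.mem_support_append_iff _ _).1 hz with h | h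
  · exact hq z h
  · exact hr z h

lemma compIn_eq_of_mem (hw : w ∈ compIn G S u) : compIn G S u = compIn G S w := by
  ext x
  exact ⟨fun hx => mem_compIn_trans (mem_compIn_symm hw) hx, fun hx => mem_compIn_trans hw hx⟩

lemma compIn_mono (hST : S ⊆ T) : compIn G S u ⊆ compIn G T u := by
  intro w hw
  obtain ⟨hu, hw1, q, hq⟩ := mem_compIn_iff.1 hw
  exact mem_compIn_iff.2 ⟨hST hu, hST hw1, q, fun z hz => hST (hq z hz)⟩

lemma mem_compIn_of_adj (hw : w ∈ compIn G S u) (hadj : G.Adj w x) (hx : x ∈ S) :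
    x ∈ compIn G S u := by
  obtain ⟨hu, hw1, q, hq⟩ := mem_compIn_iff.1 hw
  refine mem_compIn_iff.2 ⟨hu, hx, q.concat hadj, ?_⟩
  intro z hz
  rw [SimpleGraph.Walk.support_concat] at hz
  rcases List.mem_append.1 hz with h | h
  · exact hq z h
  · simp only [List.mem_singleton] at h
    exact h ▸ hx

lemma support_mem_compIn (hw : w ∈ compIn G S u) :
    ∃ q : G.Walk u w, ∀ z ∈ q.support, z ∈ compIn G S u := by
  classical
  obtain ⟨hu, hw1, q, hq⟩ := mem_compIn_iff.1 hw
  refine ⟨q, fun z hz => ?_⟩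
  refine mem_compIn_iff.2 ⟨hu, hq z hz, q.takeUntil z hz, ?_⟩
  intro y hy
  exact hq y (q.support_takeUntil_subset hz hy)

lemma compIn_subset_compIn (hT : compIn G S u ⊆ T) (hu : u ∈ S) :
    compIn G S u ⊆ compIn G T u := by
  intro w hw
  obtain ⟨q, hq⟩ := support_mem_compIn hw
  exact mem_compIn_iff.2 ⟨hT (mem_compIn_self hu), hT hw, q, fun z hz => hT (hq z hz)⟩

/-- walk between two members of a component stays (can be chosen) in the component -/
lemma exists_walk_in_compIn (hz : z ∈ compIn G S x) (hz' : z' ∈ compIn G S x) :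
    ∃ q : G.Walk z z', ∀ y ∈ q.support, y ∈ compIn G S x := by
  obtain ⟨q1, hq1⟩ := support_mem_compIn hz
  obtain ⟨q2, hq2⟩ := support_mem_compIn hz'
  refine ⟨q1.reverse.append q2, ?_⟩
  intro y hy
  rcases (SimpleGraph.Walk.mem_support_append_iff _ _).1 hy with hmem | hmem
  · exact hq1 y (by simpa using hmem)
  · exact hq2 y hmem

/-- first crossing into U along a walk -/
lemma exists_first_crossing {U : Set V} {a b : V} (q : G.Walk a b) :
    a ∉ U → b ∈ U → ∃ p z, G.Adj p z ∧ p ∉ U ∧ z ∈ U ∧ p ∈ compIn G Uᶜ a := by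
  induction q with
  | nil => exact fun ha hb => absurd hb ha
  | @cons x y c hadj p ih =>
    intro ha hb
    by_cases hy : y ∈ U
    · exact ⟨x, y, hadj, ha, hy, mem_compIn_self ha⟩
    · obtain ⟨p', z', h1, h2, h3, h4⟩ := ih hy hb
      exact ⟨p', z', h1, h2, h3,
        mem_compIn_trans (mem_compIn_of_adj (mem_compIn_self ha) hadj hy) h4⟩

/-- some crossing out of A along a walk, with both endpoints on the support -/
lemma exists_crossing {A : Set V} {a b : V} (q : G.Walk a b) :
    a ∈ A → b ∉ A → ∃ p z, G.Adj p z ∧ p ∈ A ∧ z ∉ A ∧ p ∈ q.support ∧ z ∈ q.support := by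
  induction q with
  | nil => exact fun ha hb => absurd ha hb
  | @cons x y c hadj p ih =>
    intro ha hb
    by_cases hy : y ∈ A
    · obtain ⟨p', z', h1, h2, h3, h4, h5⟩ := ih hy hb
      exact ⟨p', z', h1, h2, h3, by simp [h4], by simp [h5]⟩
    · exact ⟨x, y, hadj, ha, hy, by simp, by simp⟩



section Lattice

variable {d : ℕ} {h : (Fin d → ℤ) → ℤ} {k k₁ k₂ : ℤ} {u v w p q u' v' u₁ v₁ u₂ v₂ : Fin d → ℤ}

local notation "G" => latticeGraph d

lemma walk_le (hh : IsLatticeHHF d h) {a b : Fin d → ℤ} (q : (latticeGraph d).Walk a b) :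
    (∀ z ∈ q.support, h z ≠ k + 1) → h a ≤ k → h b ≤ k := by
  induction q with
  | nil => exact fun _ ha => ha
  | @cons x y c hadj p ih =>
    intro hs ha
    have h1 : |h x - h y| = 1 := hh x y hadj
    have h2 : h y ≠ k + 1 := hs y (by simp)
    have h1' := (abs_eq (by norm_num : (0:ℤ) ≤ 1)).1 h1
    exact ih (fun z hz => hs z (by simp [hz])) (by omega)

lemma subLL_subset_le (hh : IsLatticeHHF d h) (hu : h u ≤ k) :
    subLL d h k u ⊆ {w | h w ≤ k} := by
  intro w hw
  obtain ⟨_, _, q, hq⟩ := mem_compIn_iff.1 hw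
  exact walk_le hh q hq hu

lemma subLL_eq_le (hh : IsLatticeHHF d h) (hu : h u ≤ k) :
    subLL d h k u = compIn G {w | h w ≤ k} u := by
  apply Set.Subset.antisymm
  · exact compIn_subset_compIn (subLL_subset_le hh hu) (by simp only [Set.mem_setOf_eq]; omega)
  · exact compIn_mono (fun w hw => by simp only [Set.mem_setOf_eq] at hw ⊢; omega)

lemma self_mem_subLL (hu : h u ≤ k) : u ∈ subLL d h k u :=
  mem_compIn_self (by simp only [Set.mem_setOf_eq]; omega)

lemma subLL_subset_subLC : subLL d h k u ⊆ subLC d h k u v :=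
  fun w hw hC => (compIn_subset hC) hw

lemma self_mem_subLC (hu : h u ≤ k) : u ∈ subLC d h k u v :=
  subLL_subset_subLC (self_mem_subLL hu)

lemma not_mem_subLC_self (hh : IsLatticeHHF d h) (hu : h u ≤ k) (hv : k < h v) :
    v ∉ subLC d h k u v := by
  intro hA
  exact hA (mem_compIn_self (fun hvLL => absurd (subLL_subset_le hh hu hvLL) (by
    simp only [Set.mem_setOf_eq]; omega)))

lemma subLC_boundary (hh : IsLatticeHHF d h) (hu' : h u' ≤ k)
    (hp : p ∈ subLC d h k u' v') (hq : q ∉ subLC d h k u' v')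
    (hadj : (latticeGraph d).Adj p q) :
    p ∈ subLL d h k u' ∧ h p = k ∧ h q = k + 1 := by
  have hqC : q ∈ compIn G (subLL d h k u')ᶜ v' := not_not.1 hq
  have hpLL : p ∈ subLL d h k u' := by
    by_contra hpLL
    exact hp (mem_compIn_of_adj hqC hadj.symm hpLL)
  have hqk : h q = k + 1 := by
    by_contra hqk
    exact (compIn_subset hqC) (mem_compIn_of_adj hpLL hadj hqk)
  have h1 : |h p - h q| = 1 := hh p q hadj
  have h2 : h p ≤ k := subLL_subset_le hh hu' hpLL
  have h1' := (abs_eq (by norm_num : (0:ℤ) ≤ 1)).1 h1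
  exact ⟨hpLL, by omega, hqk⟩

lemma subLL_subset_subLL (hh : IsLatticeHHF d h) (h1 : h u₁ ≤ k₁) (h2 : h u₂ ≤ k₂)
    (hk : k₁ ≤ k₂) (hp1 : p ∈ subLL d h k₁ u₁) (hp2 : p ∈ subLL d h k₂ u₂) :
    subLL d h k₁ u₁ ⊆ subLL d h k₂ u₂ := by
  have hmono : subLL d h k₁ u₁ ⊆ compIn G {w | h w ≠ k₂ + 1} u₁ := by
    rw [subLL_eq_le hh h1]
    exact compIn_mono (fun w hw => by simp only [Set.mem_setOf_eq] at hw ⊢; omega)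
  have hp1' : p ∈ compIn G {w | h w ≠ k₂ + 1} u₁ := hmono hp1
  calc subLL d h k₁ u₁ ⊆ compIn G {w | h w ≠ k₂ + 1} u₁ := hmono
    _ = compIn G {w | h w ≠ k₂ + 1} p := compIn_eq_of_mem hp1'
    _ = subLL d h k₂ u₂ := (compIn_eq_of_mem hp2).symm

end Lattice

section Lattice2

variable {d : ℕ} {h : (Fin d → ℤ) → ℤ} {k k₁ k₂ : ℤ} {u v w w' p q u' v' u₁ v₁ u₂ v₂ : Fin d → ℤ}

local notation "G" => latticeGraph d

lemma subLL_def : subLL d h k u = compIn (latticeGraph d) {w | h w ≠ k + 1} u := rfl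

lemma subLC_def : subLC d h k u v = (compIn (latticeGraph d) (subLL d h k u)ᶜ v)ᶜ := rfl

lemma mem_sepComps_iff {A : Set (Fin d → ℤ)} :
    A ∈ sepComps d h u v ↔ IsSublevelComponent d h A ∧ u ∈ A ∧ v ∉ A := Iff.rfl

lemma sep_adj_asc (hh : IsLatticeHHF d h) (hadj : (latticeGraph d).Adj u v)
    (hv : h v = h u + 1) :
    sepComps d h u v = {subLC d h (h u) u v} := by
  ext A
  simp only [mem_sepComps_iff, Set.mem_singleton_iff]
  constructor
  · rintro ⟨⟨u', v', k', hu', hv', rfl⟩, hA, hvA⟩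
    obtain ⟨hpLL, hpk, hqk⟩ := subLC_boundary hh hu' hA hvA hadj
    subst hpk
    have hvC : v ∈ compIn G (subLL d h (h u) u')ᶜ v' := not_not.1 hvA
    have hLL : subLL d h (h u) u' = subLL d h (h u) u := compIn_eq_of_mem hpLL
    rw [subLC_def, subLC_def, hLL]
    rw [hLL] at hvC
    rw [compIn_eq_of_mem hvC]
  · rintro rfl
    exact ⟨⟨u, v, h u, le_rfl, by omega, rfl⟩, self_mem_subLC le_rfl,
      not_mem_subLC_self hh le_rfl (by omega)⟩

lemma sep_adj_desc (hh : IsLatticeHHF d h) (hadj : (latticeGraph d).Adj u v)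
    (hv : h v = h u - 1) :
    sepComps d h u v = ∅ := by
  rw [Set.eq_empty_iff_forall_notMem]
  rintro A ⟨⟨u', v', k', hu', hv', rfl⟩, hA, hvA⟩
  obtain ⟨_, hpk, hqk⟩ := subLC_boundary hh hu' hA hvA hadj
  omega

lemma sep_succ_mem (hh : IsLatticeHHF d h) (hadj : (latticeGraph d).Adj w w')
    (hasc : h w' = h w + 1) (u : Fin d → ℤ) (hu : u ∈ subLC d h (h w) w w') :
    sepComps d h u w' = insert (subLC d h (h w) w w') (sepComps d h u w) ∧
    sepComps d h w' u = sepComps d h w u := by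
  constructor
  · ext A
    simp only [mem_sepComps_iff, Set.mem_insert_iff]
    constructor
    · rintro ⟨hsub, huA, hw'A⟩
      by_cases hwA : w ∈ A
      · left
        have : A ∈ sepComps d h w w' := ⟨hsub, hwA, hw'A⟩
        rwa [sep_adj_asc hh hadj hasc, Set.mem_singleton_iff] at this
      · exact Or.inr ⟨hsub, huA, hwA⟩
    · rintro (rfl | ⟨hsub, huA, hwA⟩)
      · exact ⟨⟨w, w', h w, le_rfl, by omega, rfl⟩, hu,
          not_mem_subLC_self hh le_rfl (by omega)⟩
      · refine ⟨hsub, huA, fun hw'A => ?_⟩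
        have : A ∈ sepComps d h w' w := ⟨hsub, hw'A, hwA⟩
        rw [sep_adj_desc hh hadj.symm (by omega)] at this
        exact this
  · ext B
    simp only [mem_sepComps_iff]
    constructor
    · rintro ⟨hsub, hw'B, huB⟩
      refine ⟨hsub, ?_, huB⟩
      by_contra hwB
      have : B ∈ sepComps d h w' w := ⟨hsub, hw'B, hwB⟩
      rw [sep_adj_desc hh hadj.symm (by omega)] at this
      exact this
    · rintro ⟨hsub, hwB, huB⟩
      refine ⟨hsub, ?_, huB⟩
      by_contra hw'B
      have : B ∈ sepComps d h w w' := ⟨hsub, hwB, hw'B⟩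
      rw [sep_adj_asc hh hadj hasc, Set.mem_singleton_iff] at this
      exact huB (this ▸ hu)

lemma sep_succ_notmem (hh : IsLatticeHHF d h) (hadj : (latticeGraph d).Adj w w')
    (hasc : h w' = h w + 1) (u : Fin d → ℤ) (hu : u ∉ subLC d h (h w) w w') :
    sepComps d h u w' = sepComps d h u w ∧
    sepComps d h w u = insert (subLC d h (h w) w w') (sepComps d h w' u) := by
  constructor
  · ext A
    simp only [mem_sepComps_iff]
    constructor
    · rintro ⟨hsub, huA, hw'A⟩
      refine ⟨hsub, huA, fun hwA => ?_⟩
      have : A ∈ sepComps d h w w' := ⟨hsub, hwA, hw'A⟩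
      rw [sep_adj_asc hh hadj hasc, Set.mem_singleton_iff] at this
      exact hu (this ▸ huA)
    · rintro ⟨hsub, huA, hwA⟩
      refine ⟨hsub, huA, fun hw'A => ?_⟩
      have : A ∈ sepComps d h w' w := ⟨hsub, hw'A, hwA⟩
      rw [sep_adj_desc hh hadj.symm (by omega)] at this
      exact this
  · ext B
    simp only [mem_sepComps_iff, Set.mem_insert_iff]
    constructor
    · rintro ⟨hsub, hwB, huB⟩
      by_cases hw'B : w' ∈ B
      · exact Or.inr ⟨hsub, hw'B, huB⟩
      · left
        have : B ∈ sepComps d h w w' := ⟨hsub, hwB, hw'B⟩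
        rwa [sep_adj_asc hh hadj hasc, Set.mem_singleton_iff] at this
    · rintro (rfl | ⟨hsub, hw'B, huB⟩)
      · exact ⟨⟨w, w', h w, le_rfl, by omega, rfl⟩, self_mem_subLC le_rfl, hu⟩
      · refine ⟨hsub, ?_, huB⟩
        by_contra hwB
        have : B ∈ sepComps d h w' w := ⟨hsub, hw'B, hwB⟩
        rw [sep_adj_desc hh hadj.symm (by omega)] at this
        exact this

lemma step_main (hh : IsLatticeHHF d h) (hadj : (latticeGraph d).Adj w w') (u : Fin d → ℤ)
    (hf1 : (sepComps d h u w).Finite) (hf2 : (sepComps d h w u).Finite) :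
    (sepComps d h u w').Finite ∧ (sepComps d h w' u).Finite ∧
    ((sepComps d h u w').ncard : ℤ) - (sepComps d h w' u).ncard
      = ((sepComps d h u w).ncard : ℤ) - (sepComps d h w u).ncard + (h w' - h w) := by
  have habs := (abs_eq (by norm_num : (0:ℤ) ≤ 1)).1 (hh w w' hadj)
  rcases habs with hdesc | hasc
  · -- h w - h w' = 1, descending; use pair (w', w) ascending
    have hasc' : h w = h w' + 1 := by omega
    by_cases hu : u ∈ subLC d h (h w') w' w
    · obtain ⟨e1, e2⟩ := sep_succ_mem hh hadj.symm hasc' u hu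
      have hnm : subLC d h (h w') w' w ∉ sepComps d h u w' :=
        fun hmem => hmem.2.2 (self_mem_subLC le_rfl)
      have hf1' : (sepComps d h u w').Finite :=
        hf1.subset (e1 ▸ Set.subset_insert _ _)
      refine ⟨hf1', hf2.subset (e2 ▸ subset_rfl), ?_⟩
      rw [e1, Set.ncard_insert_of_notMem hnm hf1', ← e2]
      push_cast
      omega
    · obtain ⟨e1, e2⟩ := sep_succ_notmem hh hadj.symm hasc' u hu
      have hnm : subLC d h (h w') w' w ∉ sepComps d h w u :=
        fun hmem => not_mem_subLC_self hh le_rfl (by omega) hmem.2.1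
      refine ⟨e1 ▸ hf1, by rw [e2]; exact hf2.insert _, ?_⟩
      rw [← e1, e2, Set.ncard_insert_of_notMem hnm hf2]
      push_cast
      omega
  · -- ascending : h w - h w' = -1
    have hasc' : h w' = h w + 1 := by omega
    by_cases hu : u ∈ subLC d h (h w) w w'
    · obtain ⟨e1, e2⟩ := sep_succ_mem hh hadj hasc' u hu
      have hnm : subLC d h (h w) w w' ∉ sepComps d h u w :=
        fun hmem => hmem.2.2 (self_mem_subLC le_rfl)
      refine ⟨e1 ▸ hf1.insert _, e2 ▸ hf2, ?_⟩
      rw [e1, e2, Set.ncard_insert_of_notMem hnm hf1]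
      push_cast
      omega
    · obtain ⟨e1, e2⟩ := sep_succ_notmem hh hadj hasc' u hu
      have hnm : subLC d h (h w) w w' ∉ sepComps d h w' u :=
        fun hmem => not_mem_subLC_self hh le_rfl (by omega) hmem.2.1
      have hf2' : (sepComps d h w' u).Finite :=
        hf2.subset (e2 ▸ Set.subset_insert _ _)
      refine ⟨e1 ▸ hf1, hf2', ?_⟩
      rw [e1, e2, Set.ncard_insert_of_notMem hnm hf2']
      push_cast
      omega

lemma main_count (hh : IsLatticeHHF d h) {a b : Fin d → ℤ} (q : (latticeGraph d).Walk a b) :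
    (sepComps d h b a).Finite ∧ (sepComps d h a b).Finite ∧
    ((sepComps d h b a).ncard : ℤ) - (sepComps d h a b).ncard = h a - h b := by
  induction q with
  | nil =>
    have he : ∀ c : Fin d → ℤ, sepComps d h c c = ∅ := fun c =>
      Set.eq_empty_iff_forall_notMem.2 fun A hA => hA.2.2 hA.2.1
    rw [he]
    simp
  | @cons x y c hadj p ih =>
    obtain ⟨ih1, ih2, ih3⟩ := ih
    obtain ⟨s1, s2, s3⟩ := step_main hh hadj.symm c ih1 ih2
    exact ⟨s1, s2, by omega⟩

end Lattice2

section Lattice3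

variable {d : ℕ} {h : (Fin d → ℤ) → ℤ} {k k₁ k₂ : ℤ} {u v w w' p q u' v' u₁ v₁ u₂ v₂ : Fin d → ℤ}

local notation "G" => latticeGraph d

lemma lattice_reachable (u v : Fin d → ℤ) : (latticeGraph d).Reachable u v := by
  suffices H : ∀ (n : ℕ) (u v : Fin d → ℤ), (∑ i, (v i - u i).natAbs) = n →
      (latticeGraph d).Reachable u v from H _ u v rfl
  intro n
  induction n using Nat.strong_induction_on with
  | _ n ih =>
    intro u v hn
    by_cases huv : u = v
    · exact huv ▸ SimpleGraph.Reachable.refl u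
    · have hex : ∃ i, u i ≠ v i := by
        by_contra hc
        push_neg at hc
        exact huv (funext hc)
      obtain ⟨i, hi⟩ := hex
      classical
      set s : ℤ := if u i < v i then 1 else -1 with hs
      set u'' : Fin d → ℤ := Function.update u i (u i + s) with hu''
      have hui : u'' i = u i + s := Function.update_self i _ u
      have huj : ∀ j, j ≠ i → u'' j = u j := fun j hj => Function.update_of_ne hj _ u
      have hadj : (latticeGraph d).Adj u u'' := by
        refine ⟨i, ?_, huj⟩
        rw [hui, hs]
        split <;> omega
      have hstep : (v i - u'' i).natAbs + 1 = (v i - u i).natAbs := by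
        rw [hui, hs]
        split <;> rename_i hlt <;> omega
      have hdec : (∑ j, (v j - u'' j).natAbs) < n := by
        have h1 : ∑ j ∈ Finset.univ.erase i, (v j - u'' j).natAbs
            = ∑ j ∈ Finset.univ.erase i, (v j - u j).natAbs :=
          Finset.sum_congr rfl fun j hj => by rw [huj j (Finset.ne_of_mem_erase hj)]
        have e1 := Finset.sum_erase_add Finset.univ (fun j => (v j - u'' j).natAbs)
          (Finset.mem_univ i)
        have e2 := Finset.sum_erase_add Finset.univ (fun j => (v j - u j).natAbs)
          (Finset.mem_univ i)
        omega
      exact SimpleGraph.Reachable.trans hadj.reachable (ih _ hdec u'' v rfl)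

lemma sub_aux (hv1 : v ∉ subLC d h k₁ u₁ v₁) (hv2 : v ∉ subLC d h k₂ u₂ v₂)
    (hLL : subLL d h k₂ u₂ ⊆ subLC d h k₁ u₁ v₁) :
    subLC d h k₂ u₂ v₂ ⊆ subLC d h k₁ u₁ v₁ := by
  have hvC1 : v ∈ compIn G (subLL d h k₁ u₁)ᶜ v₁ := not_not.1 hv1
  have hvC2 : v ∈ compIn G (subLL d h k₂ u₂)ᶜ v₂ := not_not.1 hv2
  have e1 : compIn G (subLL d h k₁ u₁)ᶜ v₁ = compIn G (subLL d h k₁ u₁)ᶜ v :=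
    compIn_eq_of_mem hvC1
  have e2 : compIn G (subLL d h k₂ u₂)ᶜ v₂ = compIn G (subLL d h k₂ u₂)ᶜ v :=
    compIn_eq_of_mem hvC2
  have hv1m : v ∈ (subLL d h k₁ u₁)ᶜ := compIn_subset hvC1
  have hC1 : compIn G (subLL d h k₁ u₁)ᶜ v ⊆ (subLL d h k₂ u₂)ᶜ := by
    intro x hx hxL2
    exact (hLL hxL2) (e1 ▸ hx)
  have hsub : compIn G (subLL d h k₁ u₁)ᶜ v ⊆ compIn G (subLL d h k₂ u₂)ᶜ v :=
    compIn_subset_compIn hC1 hv1m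
  intro x hxB hxC1
  exact hxB (e2 ▸ hsub (e1 ▸ hxC1))

lemma sub_LL_mono (hv1 : v ∉ subLC d h k₁ u₁ v₁) (hv2 : v ∉ subLC d h k₂ u₂ v₂)
    (hLL : subLL d h k₁ u₁ ⊆ subLL d h k₂ u₂) :
    subLC d h k₁ u₁ v₁ ⊆ subLC d h k₂ u₂ v₂ := by
  have hvC1 : v ∈ compIn G (subLL d h k₁ u₁)ᶜ v₁ := not_not.1 hv1
  have hvC2 : v ∈ compIn G (subLL d h k₂ u₂)ᶜ v₂ := not_not.1 hv2
  have e1 : compIn G (subLL d h k₁ u₁)ᶜ v₁ = compIn G (subLL d h k₁ u₁)ᶜ v :=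
    compIn_eq_of_mem hvC1
  have e2 : compIn G (subLL d h k₂ u₂)ᶜ v₂ = compIn G (subLL d h k₂ u₂)ᶜ v :=
    compIn_eq_of_mem hvC2
  have hv2m : v ∈ (subLL d h k₂ u₂)ᶜ := compIn_subset hvC2
  have hC2 : compIn G (subLL d h k₂ u₂)ᶜ v ⊆ (subLL d h k₁ u₁)ᶜ := by
    intro x hx hxL1
    exact (compIn_subset hx) (hLL hxL1)
  have hsub : compIn G (subLL d h k₂ u₂)ᶜ v ⊆ compIn G (subLL d h k₁ u₁)ᶜ v :=
    compIn_subset_compIn hC2 hv2m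
  intro x hxA hxC2
  exact hxA (e1 ▸ hsub (e2 ▸ hxC2))

lemma subLC_comparable (hh : IsLatticeHHF d h)
    (h1 : h u₁ ≤ k₁) (h1' : k₁ < h v₁) (h2 : h u₂ ≤ k₂) (h2' : k₂ < h v₂)
    (huA : u ∈ subLC d h k₁ u₁ v₁) (huB : u ∈ subLC d h k₂ u₂ v₂)
    (hvA : v ∉ subLC d h k₁ u₁ v₁) (hvB : v ∉ subLC d h k₂ u₂ v₂) :
    subLC d h k₁ u₁ v₁ ⊆ subLC d h k₂ u₂ v₂ ∨
    subLC d h k₂ u₂ v₂ ⊆ subLC d h k₁ u₁ v₁ := by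
  by_cases hc1 : subLL d h k₂ u₂ ⊆ subLC d h k₁ u₁ v₁
  · exact Or.inr (sub_aux hvA hvB hc1)
  by_cases hc2 : ∃ z', z' ∈ subLL d h k₂ u₂ ∧ z' ∈ subLC d h k₁ u₁ v₁
  · left
    obtain ⟨z, hzL, hzA⟩ := Set.not_subset.1 hc1
    obtain ⟨z', hz'L, hz'A⟩ := hc2
    obtain ⟨q, hq⟩ := exists_walk_in_compIn hz'L hzL
    obtain ⟨p, x, hadj, hpA, hxA, hpsup, hxsup⟩ := exists_crossing q hz'A hzA
    obtain ⟨hpL1, hpk, hxk⟩ := subLC_boundary hh h1 hpA hxA hadj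
    have hxL2 : x ∈ subLL d h k₂ u₂ := hq x hxsup
    have hpL2 : p ∈ subLL d h k₂ u₂ := hq p hpsup
    have hxle : h x ≤ k₂ := subLL_subset_le hh h2 hxL2
    exact sub_LL_mono hvA hvB
      (subLL_subset_subLL hh h1 h2 (by omega) hpL1 hpL2)
  by_cases hd1 : subLL d h k₁ u₁ ⊆ subLC d h k₂ u₂ v₂
  · exact Or.inl (sub_aux hvB hvA hd1)
  by_cases hd2 : ∃ z', z' ∈ subLL d h k₁ u₁ ∧ z' ∈ subLC d h k₂ u₂ v₂
  · exfalso
    obtain ⟨z, hzL, hzB⟩ := Set.not_subset.1 hd1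
    obtain ⟨z', hz'L, hz'B⟩ := hd2
    obtain ⟨q, hq⟩ := exists_walk_in_compIn hz'L hzL
    obtain ⟨p, x, hadj, hpB, hxB, hpsup, hxsup⟩ := exists_crossing q hz'B hzB
    obtain ⟨hpL2, _, _⟩ := subLC_boundary hh h2 hpB hxB hadj
    exact hc2 ⟨p, hpL2, subLL_subset_subLC (hq p hpsup)⟩
  · exfalso
    push_neg at hc2 hd2
    have hL2C1 : ∀ z ∈ subLL d h k₂ u₂, z ∈ compIn G (subLL d h k₁ u₁)ᶜ v₁ :=
      fun z hz => not_not.1 (hc2 z hz)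
    have hL1C2 : ∀ z ∈ subLL d h k₁ u₁, z ∈ compIn G (subLL d h k₂ u₂)ᶜ v₂ :=
      fun z hz => not_not.1 (hd2 z hz)
    apply huA
    by_cases huL2 : u ∈ subLL d h k₂ u₂
    · exact hL2C1 u huL2
    · have hu2L2 : u₂ ∈ subLL d h k₂ u₂ := self_mem_subLL h2
      obtain ⟨q⟩ := lattice_reachable (d := d) u u₂
      obtain ⟨p, x, hadj, hpU, hxU, hpD⟩ := exists_first_crossing q huL2 hu2L2
      have hD1 : compIn G (subLL d h k₂ u₂)ᶜ u ⊆ (subLL d h k₁ u₁)ᶜ := by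
        intro z hz hzL1
        exact huB (mem_compIn_trans (hL1C2 z hzL1) (mem_compIn_symm hz))
      have hxC1 : x ∈ compIn G (subLL d h k₁ u₁)ᶜ v₁ := hL2C1 x hxU
      have hpC1 : p ∈ compIn G (subLL d h k₁ u₁)ᶜ v₁ :=
        mem_compIn_of_adj hxC1 hadj.symm (hD1 hpD)
      have humemD : u ∈ compIn G (subLL d h k₂ u₂)ᶜ u :=
        mem_compIn_self (show u ∈ (subLL d h k₂ u₂)ᶜ from huL2)
      obtain ⟨r, hr⟩ := exists_walk_in_compIn humemD hpD
      have humem : u ∈ compIn G (subLL d h k₁ u₁)ᶜ p := by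
        refine mem_compIn_iff.2 ⟨hD1 hpD, hD1 humemD, r.reverse, ?_⟩
        intro z hz
        rw [SimpleGraph.Walk.support_reverse] at hz
        exact hD1 (hr z (List.mem_reverse.1 hz))
      exact mem_compIn_trans hpC1 humem

end Lattice3

end P3C





theorem stmt17 (d : ℕ) (h : (Fin d → ℤ) → ℤ) (hh : h ∈ P3C.homZeroLattice d)
    (u v : Fin d → ℤ) :
    (P3C.sepComps d h u v).Finite ∧
    (∀ A ∈ P3C.sepComps d h u v, ∀ B ∈ P3C.sepComps d h u v, A ⊆ B ∨ B ⊆ A) ∧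
    h v - h u = (Nat.card ↥(P3C.sepComps d h u v) : ℤ) - (Nat.card ↥(P3C.sepComps d h v u) : ℤ) := by
  obtain ⟨hh', h0⟩ := hh
  obtain ⟨q⟩ := P3C.lattice_reachable (d := d) v u
  obtain ⟨f1, f2, f3⟩ := P3C.main_count hh' q
  refine ⟨f1, ?_, ?_⟩
  · rintro A ⟨⟨u₁, v₁, k₁, h1, h1', rfl⟩, huA, hvA⟩ B ⟨⟨u₂, v₂, k₂, h2, h2', rfl⟩, huB, hvB⟩
    exact P3C.subLC_comparable hh' h1 h1' h2 h2' huA huB hvA hvB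
  · rw [Nat.card_coe_set_eq, Nat.card_coe_set_eq]
    omega
end

section
/- Let n ≥ 2 be an even integer and let h ∈ QP_m for some m ∈ ℤ^d with m_1 > 0. Then there exists a sublevel component A of h that contains 0, does not contain n·e_1, and is translation respecting of type 0 (i.e. |T_A| > 1 and T_A is totally ordered by inclusion). -/
namespace P3CAux
open P3C Relation

variable {d : ℕ}

/-! ### Translation of sets -/

def tr (x : Fin d → ℤ) (U : Set (Fin d → ℤ)) : Set (Fin d → ℤ) := (fun u => u + x) '' U

lemma mem_tr {x w : Fin d → ℤ} {U : Set (Fin d → ℤ)} : w ∈ tr x U ↔ w - x ∈ U := by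
  constructor
  · rintro ⟨u, hu, rfl⟩; simpa using hu
  · intro hw; exact ⟨w - x, hw, by funext i; simp only [Pi.add_apply, Pi.sub_apply]; ring⟩

lemma tr_compl (x : Fin d → ℤ) (U : Set (Fin d → ℤ)) : tr x Uᶜ = (tr x U)ᶜ := by
  ext w; simp [mem_tr]

lemma tr_tr (x y : Fin d → ℤ) (U : Set (Fin d → ℤ)) : tr y (tr x U) = tr (x + y) U := by
  ext w; simp [mem_tr, sub_sub, add_comm x y]

lemma tr_zero (U : Set (Fin d → ℤ)) : tr 0 U = U := by
  ext w; simp [mem_tr]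

/-! ### Adjacency -/

lemma adj_iff {a b : Fin d → ℤ} :
    (latticeGraph d).Adj a b ↔
      ∃ i, (b i = a i + 1 ∨ b i = a i - 1) ∧ ∀ j, j ≠ i → b j = a j := Iff.rfl

lemma adj_tr {a b : Fin d → ℤ} (x : Fin d → ℤ) (h : (latticeGraph d).Adj a b) :
    (latticeGraph d).Adj (a + x) (b + x) := by
  obtain ⟨i, h1, h2⟩ := h
  refine ⟨i, ?_, fun j hj => ?_⟩
  · simp only [Pi.add_apply]; omega
  · simp only [Pi.add_apply, h2 j hj]

lemma adj_step (i : Fin d) (s : ℤ) (hs : s = 1 ∨ s = -1) (w : Fin d → ℤ) :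
    (latticeGraph d).Adj w (w + Pi.single i s) := by
  refine ⟨i, ?_, fun j hj => ?_⟩
  · simp only [Pi.add_apply, Pi.single_eq_same]; omega
  · simp [Pi.single_eq_of_ne hj]

/-! ### Reachability relation -/

def rel (S : Set (Fin d → ℤ)) (p q : Fin d → ℤ) : Prop :=
  (latticeGraph d).Adj p q ∧ p ∈ S ∧ q ∈ S

lemma rel_symm (S : Set (Fin d → ℤ)) : Symmetric (rel S) :=
  fun _ _ ⟨h1, h2, h3⟩ => ⟨h1.symm, h3, h2⟩

lemma rtg_symm {S : Set (Fin d → ℤ)} {a b : Fin d → ℤ}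
    (h : ReflTransGen (rel S) a b) : ReflTransGen (rel S) b a :=
  by
    induction h with
    | refl => exact .refl
    | tail _ st ih => exact ih.head (rel_symm S st)

lemma rtg_mono {S T : Set (Fin d → ℤ)} (hST : S ⊆ T) {a b : Fin d → ℤ}
    (h : ReflTransGen (rel S) a b) : ReflTransGen (rel T) a b :=
  ReflTransGen.mono (p := rel T) (fun x y (hxy : rel S x y) =>
    (⟨hxy.1, hST hxy.2.1, hST hxy.2.2⟩ : rel T x y)) a b h

lemma rtg_mem_right {S : Set (Fin d → ℤ)} {a b : Fin d → ℤ}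
    (h : ReflTransGen (rel S) a b) (ha : a ∈ S) : b ∈ S := by
  induction h with
  | refl => exact ha
  | tail _ st _ => exact st.2.2

lemma first_cross {α : Type*} {r' : α → α → Prop} {W : Set α} {a b : α}
    (hr : ReflTransGen r' a b) (ha : a ∈ W) (hb : b ∉ W) :
    ∃ p q, r' p q ∧ p ∈ W ∧ q ∉ W := by
  induction hr with
  | refl => exact absurd ha hb
  | @tail c b' hr st ih =>
    by_cases hc : c ∈ W
    · exact ⟨c, b', st, hc, hb⟩
    · exact ih hc

/-! ### Bridging with induced-subgraph reachability -/

lemma reachable_of_rtg {S : Set (Fin d → ℤ)} {a b : Fin d → ℤ} (ha : a ∈ S)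
    (hr : ReflTransGen (rel S) a b) :
    ∀ hb : b ∈ S, ((latticeGraph d).induce S).Reachable ⟨a, ha⟩ ⟨b, hb⟩ := by
  induction hr with
  | refl => intro hb; rfl
  | @tail c b' hr st ih =>
    intro hb
    exact (ih st.2.1).trans (SimpleGraph.Adj.reachable (by exact st.1))

lemma rtg_of_walk {S : Set (Fin d → ℤ)} :
    ∀ {u v : ↥S}, ((latticeGraph d).induce S).Walk u v → ReflTransGen (rel S) ↑u ↑v := by
  intro u v w
  induction w with
  | nil => exact .refl
  | @cons a c v hadj p ih => exact .head ⟨hadj, a.2, c.2⟩ ih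

lemma mem_compIn_iff {S : Set (Fin d → ℤ)} {u w : Fin d → ℤ} :
    w ∈ compIn (latticeGraph d) S u ↔
      ∃ (_ : u ∈ S) (_ : w ∈ S), ReflTransGen (rel S) u w := by
  constructor
  · rintro ⟨hu, hw, ⟨p⟩⟩; exact ⟨hu, hw, rtg_of_walk p⟩
  · rintro ⟨hu, hw, hr⟩; exact ⟨hu, hw, reachable_of_rtg hu hr hw⟩

/-! ### compIn lemmas -/

lemma compIn_self {S : Set (Fin d → ℤ)} {u : Fin d → ℤ} (hu : u ∈ S) :
    u ∈ compIn (latticeGraph d) S u := mem_compIn_iff.mpr ⟨hu, hu, .refl⟩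

lemma compIn_subset {S : Set (Fin d → ℤ)} {u : Fin d → ℤ} :
    compIn (latticeGraph d) S u ⊆ S := by
  intro w hw
  obtain ⟨_, hw, _⟩ := mem_compIn_iff.mp hw
  exact hw

lemma compIn_absorb {S : Set (Fin d → ℤ)} {u w q : Fin d → ℤ}
    (hw : w ∈ compIn (latticeGraph d) S u) (hadj : (latticeGraph d).Adj w q) (hq : q ∈ S) :
    q ∈ compIn (latticeGraph d) S u := by
  obtain ⟨hu, hwS, hr⟩ := mem_compIn_iff.mp hw
  exact mem_compIn_iff.mpr ⟨hu, hq, hr.tail ⟨hadj, hwS, hq⟩⟩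

lemma compIn_of_rtg {S : Set (Fin d → ℤ)} {v b w : Fin d → ℤ}
    (hb : b ∈ compIn (latticeGraph d) S v) (hr : ReflTransGen (rel S) b w) :
    w ∈ compIn (latticeGraph d) S v := by
  obtain ⟨hv, hbS, hr0⟩ := mem_compIn_iff.mp hb
  exact mem_compIn_iff.mpr ⟨hv, rtg_mem_right hr hbS, hr0.trans hr⟩

lemma compIn_eq_of_mem {S : Set (Fin d → ℤ)} {u w : Fin d → ℤ}
    (hw : w ∈ compIn (latticeGraph d) S u) :
    compIn (latticeGraph d) S w = compIn (latticeGraph d) S u := by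
  obtain ⟨huS, hwS, hr0⟩ := mem_compIn_iff.mp hw
  ext z
  constructor
  · intro hz
    obtain ⟨_, hzS, hr⟩ := mem_compIn_iff.mp hz
    exact mem_compIn_iff.mpr ⟨huS, hzS, hr0.trans hr⟩
  · intro hz
    obtain ⟨_, hzS, hr⟩ := mem_compIn_iff.mp hz
    exact mem_compIn_iff.mpr ⟨hwS, hzS, (rtg_symm hr0).trans hr⟩

lemma rtg_in_compIn {S : Set (Fin d → ℤ)} {u w : Fin d → ℤ}
    (hw : w ∈ compIn (latticeGraph d) S u) :
    ReflTransGen (rel (compIn (latticeGraph d) S u)) u w := by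
  obtain ⟨huS, hwS, hr⟩ := mem_compIn_iff.mp hw
  clear hw hwS
  induction hr with
  | refl => exact .refl
  | @tail c w' hr st ih =>
    have hc : c ∈ compIn (latticeGraph d) S u := mem_compIn_iff.mpr ⟨huS, st.2.1, hr⟩
    have hw' : w' ∈ compIn (latticeGraph d) S u := mem_compIn_iff.mpr ⟨huS, st.2.2, hr.tail st⟩
    exact ih.tail ⟨st.1, hc, hw'⟩

/-! ### Translation of compIn -/

lemma rtg_tr (x : Fin d → ℤ) {S : Set (Fin d → ℤ)} {a b : Fin d → ℤ}
    (h : ReflTransGen (rel S) a b) : ReflTransGen (rel (tr x S)) (a + x) (b + x) := by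
  induction h with
  | refl => exact .refl
  | tail hr st ih =>
    exact ih.tail ⟨adj_tr x st.1, mem_tr.mpr (by simpa using st.2.1),
      mem_tr.mpr (by simpa using st.2.2)⟩

lemma compIn_tr (x : Fin d → ℤ) (S : Set (Fin d → ℤ)) (u : Fin d → ℤ) :
    compIn (latticeGraph d) (tr x S) (u + x) = tr x (compIn (latticeGraph d) S u) := by
  ext w
  rw [mem_tr, mem_compIn_iff, mem_compIn_iff]
  constructor
  · rintro ⟨hu, hw, hr⟩
    have hr' := rtg_tr (-x) hr
    rw [tr_tr, add_neg_cancel, tr_zero] at hr'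
    have e1 : u + x + -x = u := by abel
    have e2 : w + -x = w - x := by abel
    rw [e1, e2] at hr'
    refine ⟨?_, ?_, hr'⟩
    · have := mem_tr.mp hu; simpa using this
    · exact mem_tr.mp hw
  · rintro ⟨hu, hw, hr⟩
    have hr' := rtg_tr x hr
    have e2 : w - x + x = w := by abel
    rw [e2] at hr'
    exact ⟨mem_tr.mpr (by simpa using hu), mem_tr.mpr (by simpa using hw), hr'⟩

/-! ### Lattice connectivity -/

lemma lattice_rtg (a b : Fin d → ℤ) : ReflTransGen (latticeGraph d).Adj a b := by
  suffices H : ∀ (N : ℕ) (a b : Fin d → ℤ), (∑ i, (b i - a i).natAbs) = N →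
      ReflTransGen (latticeGraph d).Adj a b from H _ a b rfl
  intro N
  induction N using Nat.strong_induction_on with
  | _ N ih =>
    intro a b hN
    rcases Nat.eq_zero_or_pos N with h0 | hpos
    · subst h0
      have : a = b := by
        funext i
        have : (b i - a i).natAbs = 0 := by
          have := Finset.sum_eq_zero_iff.mp hN i (Finset.mem_univ i)
          omega
        omega
      rw [this]
    · have : ∃ j, (b j - a j).natAbs ≠ 0 := by
        by_contra hcon
        push_neg at hcon
        rw [Finset.sum_eq_zero (fun i _ => hcon i)] at hN
        omega
      obtain ⟨j, hj⟩ := this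
      set s : ℤ := if a j < b j then 1 else -1 with hs
      set a' := a + Pi.single j s with ha'
      have hadj : (latticeGraph d).Adj a a' := adj_step j s (by rw [hs]; split <;> simp) a
      have haj : a' j = a j + s := by simp [ha']
      have ha'i : ∀ i, i ≠ j → a' i = a i := fun i hij => by simp [ha', Pi.single_eq_of_ne hij]
      have hsum : (∑ i, (b i - a' i).natAbs) + 1 = N := by
        rw [← hN]
        rw [← Finset.add_sum_erase _ (fun i => (b i - a' i).natAbs) (Finset.mem_univ j),
            ← Finset.add_sum_erase _ (fun i => (b i - a i).natAbs) (Finset.mem_univ j)]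
        have h1 : ∑ i ∈ Finset.univ.erase j, (b i - a' i).natAbs =
            ∑ i ∈ Finset.univ.erase j, (b i - a i).natAbs :=
          Finset.sum_congr rfl (fun i hi => by rw [ha'i i (Finset.ne_of_mem_erase hi)])
        have h2 : (b j - a' j).natAbs + 1 = (b j - a j).natAbs := by
          rw [haj]
          by_cases hlt : a j < b j <;> simp only [hs, if_pos, if_neg, hlt, if_true, if_false] <;> omega
        omega
      exact .head hadj (ih (∑ i, (b i - a' i).natAbs) (by omega) a' b rfl)

end P3CAux
namespace P3CAux
open P3C Relation

variable {d : ℕ}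

/-! ### Height function step lemmas -/

lemma hdiff {h : (Fin d → ℤ) → ℤ} (hstep : IsLatticeHHF d h) {a b : Fin d → ℤ}
    (hadj : (latticeGraph d).Adj a b) : h b = h a + 1 ∨ h b = h a - 1 := by
  have h1 := hstep a b hadj
  rcases (abs_eq (by norm_num : (0:ℤ) ≤ 1)).mp h1 with h2 | h2
  · right; omega
  · left; omega

lemma rtg_height_le {h : (Fin d → ℤ) → ℤ} (hstep : IsLatticeHHF d h) {k : ℤ} {u w : Fin d → ℤ}
    (hu : h u ≤ k) (hr : ReflTransGen (rel {w | h w ≠ k + 1}) u w) : h w ≤ k := by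
  induction hr with
  | refl => exact hu
  | tail hr st ih =>
    have h1 := hdiff hstep st.1
    have h2 : h _ ≠ k + 1 := st.2.2
    omega

lemma subLL_height_le {h : (Fin d → ℤ) → ℤ} (hstep : IsLatticeHHF d h) {k : ℤ} {u w : Fin d → ℤ}
    (hu : h u ≤ k) (hw : w ∈ subLL d h k u) : h w ≤ k := by
  obtain ⟨_, _, hr⟩ := mem_compIn_iff.mp hw
  exact rtg_height_le hstep hu hr

/-! ### The sublevel component boundary package -/

lemma u_mem_subLL {h : (Fin d → ℤ) → ℤ} {k : ℤ} {u : Fin d → ℤ} (hu : h u ≤ k) :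
    u ∈ subLL d h k u := compIn_self (by simp only [Set.mem_setOf_eq]; omega)

lemma not_mem_subLL_of_gt {h : (Fin d → ℤ) → ℤ} (hstep : IsLatticeHHF d h) {k : ℤ}
    {u w : Fin d → ℤ} (hu : h u ≤ k) (hw : k < h w) : w ∉ subLL d h k u :=
  fun hmem => absurd (subLL_height_le hstep hu hmem) (by omega)

lemma v_mem_K {h : (Fin d → ℤ) → ℤ} (hstep : IsLatticeHHF d h) {k : ℤ} {u v : Fin d → ℤ}
    (hu : h u ≤ k) (hv : k < h v) :
    v ∈ compIn (latticeGraph d) (subLL d h k u)ᶜ v :=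
  compIn_self (not_mem_subLL_of_gt hstep hu hv)

/-- The key boundary-edge package: an edge crossing out of a sublevel component `A = Kᶜ`
has its `A`-side in `LL` at height `k` and its outside in `K` at height `k+1`. -/
lemma bdry_pack {h : (Fin d → ℤ) → ℤ} (hstep : IsLatticeHHF d h) {k : ℤ} {u v p q : Fin d → ℤ}
    (hu : h u ≤ k) (_hv : k < h v)
    (hadj : (latticeGraph d).Adj p q)
    (hp : p ∉ compIn (latticeGraph d) (subLL d h k u)ᶜ v)
    (hq : q ∈ compIn (latticeGraph d) (subLL d h k u)ᶜ v) :
    p ∈ subLL d h k u ∧ h p = k ∧ h q = k + 1 := by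
  have hqLL : q ∉ subLL d h k u := compIn_subset hq
  have hpLL : p ∈ subLL d h k u := by
    by_contra hpL
    exact hp (compIn_absorb hq hadj.symm hpL)
  have hqh : h q = k + 1 := by
    by_contra hne
    exact hqLL (compIn_absorb hpLL hadj hne)
  have hple : h p ≤ k := subLL_height_le hstep hu hpLL
  have := hdiff hstep hadj
  exact ⟨hpLL, by omega, hqh⟩

/-! ### Quasi-periodic translation structure -/

def phi (n : ℕ) (m : Fin d → ℤ) (w : Fin d → ℤ) : ℤ := ∑ i, m i * (w i / (n : ℤ))

def xdvd (n : ℕ) (x : Fin d → ℤ) : Prop := ∀ i, (n : ℤ) ∣ x i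

variable {n : ℕ} {m : Fin d → ℤ} {h : (Fin d → ℤ) → ℤ}

lemma h_single (hQP : ∀ (v : Fin d → ℤ) (i : Fin d), h (v + Pi.single i (n : ℤ)) = h v + m i)
    (w : Fin d → ℤ) (i : Fin d) (t : ℤ) :
    h (w + Pi.single i ((n : ℤ) * t)) = h w + m i * t := by
  induction t using Int.induction_on with
  | zero => simp
  | succ t ih =>
    have e : w + Pi.single i ((n : ℤ) * (t + 1)) =
        (w + Pi.single i ((n : ℤ) * t)) + Pi.single i (n : ℤ) := by
      rw [add_assoc, ← Pi.single_add]
      ring_nf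
    rw [e, hQP, ih]; ring
  | pred t ih =>
    have e : w + Pi.single i ((n : ℤ) * (-t)) =
        (w + Pi.single i ((n : ℤ) * (-t - 1))) + Pi.single i (n : ℤ) := by
      rw [add_assoc, ← Pi.single_add]
      ring_nf
    have := hQP (w + Pi.single i ((n : ℤ) * (-t - 1))) i
    rw [← e] at this
    rw [ih] at this
    have : h (w + Pi.single i ((n : ℤ) * (-t - 1))) = h w + m i * (-t) - m i := by omega
    rw [this]; ring

lemma abs_m_le (hstep : IsLatticeHHF d h)
    (hQP : ∀ (v : Fin d → ℤ) (i : Fin d), h (v + Pi.single i (n : ℤ)) = h v + m i)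
    (i : Fin d) : |m i| ≤ (n : ℤ) := by
  have key : ∀ (t : ℕ) (w : Fin d → ℤ), |h (w + Pi.single i (t : ℤ)) - h w| ≤ (t : ℤ) := by
    intro t
    induction t with
    | zero => intro w; simp
    | succ t ih =>
      intro w
      have e : w + Pi.single i ((t + 1 : ℕ) : ℤ) =
          (w + Pi.single i (t : ℤ)) + Pi.single i 1 := by
        rw [add_assoc, ← Pi.single_add]
        push_cast
        ring_nf
      have hadj := adj_step i 1 (Or.inl rfl) (w + Pi.single i (t : ℤ))
      have h1 := hdiff hstep hadj
      have h2 := ih w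
      rw [e]
      rw [abs_le] at h2 ⊢
      constructor <;> push_cast <;> omega
  have h0 := key n 0
  have h1 := hQP 0 i
  rw [h1] at h0
  simpa using h0

lemma h_add (hQP : ∀ (v : Fin d → ℤ) (i : Fin d), h (v + Pi.single i (n : ℤ)) = h v + m i)
    (hn0 : (n : ℤ) ≠ 0) {x : Fin d → ℤ} (hx : xdvd n x) (w : Fin d → ℤ) :
    h (w + x) = h w + phi n m x := by
  suffices H : ∀ (s : Finset (Fin d)) (x : Fin d → ℤ), xdvd n x → (∀ i ∉ s, x i = 0) →
      h (w + x) = h w + ∑ i ∈ s, m i * (x i / (n : ℤ)) from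
    H Finset.univ x hx (by simp)
  intro s
  induction s using Finset.induction with
  | empty =>
    intro x _ h0
    have : x = 0 := funext fun i => h0 i (by simp)
    simp [this]
  | @insert a s ha ih =>
    intro x hx h0
    set x' := Function.update x a 0 with hx'def
    have hx'dvd : xdvd n x' := fun i => by
      by_cases hia : i = a
      · subst hia; simp [hx'def]
      · simp only [hx'def, Function.update_of_ne hia]; exact hx i
    have hx'0 : ∀ i ∉ s, x' i = 0 := fun i his => by
      by_cases hia : i = a
      · subst hia; simp [hx'def]
      · simp only [hx'def, Function.update_of_ne hia]
        exact h0 i (by simp [his, hia])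
    have hdecomp : x = x' + Pi.single a (x a) := by
      funext j
      by_cases hja : j = a
      · subst hja; simp [hx'def]
      · simp [hx'def, Function.update_of_ne hja, Pi.single_eq_of_ne hja]
    have hxa : (n : ℤ) * (x a / (n : ℤ)) = x a := Int.mul_ediv_cancel' (hx a)
    have e : w + x = (w + x') + Pi.single a ((n : ℤ) * (x a / (n : ℤ))) := by
      rw [hxa]
      funext j
      by_cases hja : j = a
      · subst hja
        simp [hx'def]
      · simp [hx'def, Function.update_of_ne hja, Pi.single_eq_of_ne hja]
    rw [e, h_single hQP, ih x' hx'dvd hx'0, Finset.sum_insert ha]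
    have : ∑ i ∈ s, m i * (x' i / (n : ℤ)) = ∑ i ∈ s, m i * (x i / (n : ℤ)) :=
      Finset.sum_congr rfl (fun i hi => by
        rw [hx'def, Function.update_of_ne (ne_of_mem_of_not_mem hi ha)])
    rw [this]; ring

lemma phi_add (hn0 : (n : ℤ) ≠ 0) {x : Fin d → ℤ} (hx : xdvd n x) (w : Fin d → ℤ) :
    phi n m (w + x) = phi n m w + phi n m x := by
  unfold phi
  rw [← Finset.sum_add_distrib]
  refine Finset.sum_congr rfl (fun i _ => ?_)
  obtain ⟨t, ht⟩ := hx i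
  have : (w i + x i) / (n : ℤ) = w i / (n : ℤ) + x i / (n : ℤ) := by
    rw [ht, Int.add_mul_ediv_left _ t hn0, Int.mul_ediv_cancel_left _ hn0]
  simp only [Pi.add_apply, this]
  ring

lemma phi_single (hd : 0 < d) (hn0 : (n : ℤ) ≠ 0) (t : ℤ) :
    phi n m (Pi.single (⟨0, hd⟩ : Fin d) ((n : ℤ) * t)) = m ⟨0, hd⟩ * t := by
  unfold phi
  rw [Finset.sum_eq_single (⟨0, hd⟩ : Fin d)]
  · rw [Pi.single_eq_same, Int.mul_ediv_cancel_left _ hn0]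
  · intro b _ hb
    rw [Pi.single_eq_of_ne hb]
    simp
  · simp

lemma phi_zero : phi n m (0 : Fin d → ℤ) = 0 := by
  unfold phi; simp

/-! ### Box bounds -/

noncomputable def MM (n d : ℕ) (h : (Fin d → ℤ) → ℤ) : ℤ :=
  (insert (h 0) (Finset.image (fun f : Fin d → Fin n => h (fun i => ((f i : ℕ) : ℤ)))
    Finset.univ)).max' (Finset.insert_nonempty _ _)

noncomputable def mu (n d : ℕ) (h : (Fin d → ℤ) → ℤ) : ℤ :=
  (insert (h 0) (Finset.image (fun f : Fin d → Fin n => h (fun i => ((f i : ℕ) : ℤ)))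
    Finset.univ)).min' (Finset.insert_nonempty _ _)

lemma residue_bounds (hQP : ∀ (v : Fin d → ℤ) (i : Fin d), h (v + Pi.single i (n : ℤ)) = h v + m i)
    (hn2 : 2 ≤ n) (w : Fin d → ℤ) :
    mu n d h + phi n m w ≤ h w ∧ h w ≤ MM n d h + phi n m w := by
  have hn0 : (n : ℤ) ≠ 0 := by positivity
  have hnpos : (0 : ℤ) < n := by positivity
  have hres : ∀ i, 0 ≤ w i % (n : ℤ) ∧ w i % (n : ℤ) < n :=
    fun i => ⟨Int.emod_nonneg _ hn0, Int.emod_lt_of_pos _ hnpos⟩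
  set f : Fin d → Fin n := fun i => ⟨(w i % (n : ℤ)).toNat, by have := hres i; omega⟩ with hf
  have hfeq : (fun i => ((f i : ℕ) : ℤ)) = fun i => w i % (n : ℤ) := by
    funext i
    simp only [hf]
    exact Int.toNat_of_nonneg (hres i).1
  have hkey : h w = h (fun i => w i % (n : ℤ)) + phi n m w := by
    set x := w - (fun i => w i % (n : ℤ)) with hxdef
    have hxi : ∀ i, x i = (n : ℤ) * (w i / (n : ℤ)) := fun i => by
      have := Int.mul_ediv_add_emod (w i) (n : ℤ)
      simp only [hxdef, Pi.sub_apply]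
      omega
    have hxdvd : xdvd n x := fun i => ⟨w i / (n : ℤ), hxi i⟩
    have hphix : phi n m x = phi n m w := by
      unfold phi
      refine Finset.sum_congr rfl (fun i _ => ?_)
      rw [hxi i, Int.mul_ediv_cancel_left _ hn0]
    have hw : w = (fun i => w i % (n : ℤ)) + x := by
      funext i; simp [hxdef]
    calc h w = h ((fun i => w i % (n : ℤ)) + x) := by rw [← hw]
      _ = h (fun i => w i % (n : ℤ)) + phi n m x := h_add hQP hn0 hxdvd _
      _ = h (fun i => w i % (n : ℤ)) + phi n m w := by rw [hphix]
  have hmem : h (fun i => w i % (n : ℤ)) ∈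
      insert (h 0) (Finset.image (fun f : Fin d → Fin n => h (fun i => ((f i : ℕ) : ℤ)))
        Finset.univ) := by
    refine Finset.mem_insert_of_mem ?_
    rw [← hfeq]
    exact Finset.mem_image_of_mem _ (Finset.mem_univ f)
  constructor
  · have h1 : mu n d h ≤ h (fun i => w i % (n : ℤ)) := Finset.min'_le _ _ hmem
    omega
  · have h2 : h (fun i => w i % (n : ℤ)) ≤ MM n d h := Finset.le_max' _ _ hmem
    omega

end P3CAux
namespace P3CAux
open P3C Relation

variable {d n : ℕ} {m : Fin d → ℤ}

lemma phi_single_diff (j : Fin d) (t : ℤ) (w : Fin d → ℤ) :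
    phi n m (w + Pi.single j t) =
      phi n m w + m j * ((w j + t) / (n : ℤ) - w j / (n : ℤ)) := by
  have : phi n m (w + Pi.single j t) - phi n m w =
      m j * ((w j + t) / (n : ℤ) - w j / (n : ℤ)) := by
    rw [phi, phi, ← Finset.sum_sub_distrib, Finset.sum_eq_single j]
    · simp only [Pi.add_apply, Pi.single_eq_same]; ring
    · intro b _ hb
      simp only [Pi.add_apply, Pi.single_eq_of_ne hb, add_zero, sub_self]
    · simp
  omega

lemma ediv_succ_bounds {a : ℤ} (hnpos : (0:ℤ) < n) :
    a / (n : ℤ) ≤ (a + 1) / (n : ℤ) ∧ (a + 1) / (n : ℤ) ≤ a / (n : ℤ) + 1 := by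
  constructor
  · exact Int.ediv_le_ediv hnpos (by omega)
  · have h1 : (a + (n : ℤ) * 1) / (n : ℤ) = a / (n : ℤ) + 1 :=
      Int.add_mul_ediv_left a 1 (by omega)
    have h2 : (a + 1) / (n : ℤ) ≤ (a + (n : ℤ) * 1) / (n : ℤ) :=
      Int.ediv_le_ediv hnpos (by omega)
    omega

lemma phi_step_bound (hnpos : (0:ℤ) < n) (hmb : ∀ i, |m i| ≤ (n : ℤ))
    (j : Fin d) {s : ℤ} (hs : s = 1 ∨ s = -1) (w : Fin d → ℤ) :
    |phi n m (w + Pi.single j s) - phi n m w| ≤ (n : ℤ) := by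
  rw [phi_single_diff]
  have hδ : |(w j + s) / (n : ℤ) - w j / (n : ℤ)| ≤ 1 := by
    rcases hs with rfl | rfl
    · have := ediv_succ_bounds (a := w j) hnpos
      rw [abs_le]; omega
    · have := ediv_succ_bounds (a := w j - 1) hnpos
      have e : w j - 1 + 1 = w j := by ring
      rw [e] at this
      rw [abs_le]
      have e2 : w j + -1 = w j - 1 := by ring
      rw [e2]; omega
  have habs : |m j * ((w j + s) / (n : ℤ) - w j / (n : ℤ))| ≤ (n : ℤ) := by
    rw [abs_mul]
    calc |m j| * |(w j + s) / (n : ℤ) - w j / (n : ℤ)| ≤ (n : ℤ) * 1 := by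
          apply mul_le_mul (hmb j) hδ (abs_nonneg _) (by omega)
      _ = (n : ℤ) := by ring
  rw [abs_le] at habs ⊢
  omega

section Anchor

variable {ε B : ℤ}

lemma down_step_mono (hd : 0 < d) (hε : ε = 1 ∨ ε = -1) (hnpos : (0:ℤ) < n)
    (hm1 : 1 ≤ m ⟨0, hd⟩) (w : Fin d → ℤ) :
    ε * phi n m (w + Pi.single (⟨0, hd⟩ : Fin d) (-ε)) ≤ ε * phi n m w := by
  rw [phi_single_diff]
  rcases hε with rfl | rfl
  · have := ediv_succ_bounds (a := w ⟨0, hd⟩ - 1) hnpos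
    have e : w ⟨0, hd⟩ - 1 + 1 = w ⟨0, hd⟩ := by ring
    rw [e] at this
    have hδ : (w ⟨0, hd⟩ + -1) / (n:ℤ) - w ⟨0, hd⟩ / (n:ℤ) ≤ 0 := by
      have e2 : w ⟨0, hd⟩ + -1 = w ⟨0, hd⟩ - 1 := by ring
      rw [e2]; omega
    nlinarith [hm1]
  · have := ediv_succ_bounds (a := w ⟨0, hd⟩) hnpos
    have hδ : 0 ≤ (w ⟨0, hd⟩ + - -1) / (n:ℤ) - w ⟨0, hd⟩ / (n:ℤ) := by
      have e2 : w ⟨0, hd⟩ + - -1 = w ⟨0, hd⟩ + 1 := by ring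
      rw [e2]; omega
    nlinarith [hm1]

lemma down_n2 (hd : 0 < d) (hε : ε = 1 ∨ ε = -1) (hnpos : (0:ℤ) < n) (w : Fin d → ℤ) :
    ε * phi n m (w + Pi.single (⟨0, hd⟩ : Fin d) (-ε * ((n:ℤ) * (n:ℤ)))) =
      ε * phi n m w - (n : ℤ) * m ⟨0, hd⟩ := by
  rw [phi_single_diff]
  have e : w ⟨0, hd⟩ + -ε * ((n:ℤ) * (n:ℤ)) = w ⟨0, hd⟩ + (n:ℤ) * (-ε * (n:ℤ)) := by ring
  rw [e, Int.add_mul_ediv_left _ (-ε * (n:ℤ)) (by omega)]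
  rcases hε with rfl | rfl <;> ring

lemma line_reach (hd : 0 < d) (hε : ε = 1 ∨ ε = -1) (hnpos : (0:ℤ) < n)
    (hm1 : 1 ≤ m ⟨0, hd⟩) (w : Fin d → ℤ) (hw : w ∈ {w | ε * phi n m w ≤ B}) (a : ℕ) :
    ReflTransGen (rel {w | ε * phi n m w ≤ B}) w
        (w + Pi.single (⟨0, hd⟩ : Fin d) (-ε * (a : ℤ))) ∧
      (w + Pi.single (⟨0, hd⟩ : Fin d) (-ε * (a : ℤ))) ∈ {w | ε * phi n m w ≤ B} := by
  induction a with
  | zero => simpa using ⟨.refl, hw⟩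
  | succ a ih =>
    set w' := w + Pi.single (⟨0, hd⟩ : Fin d) (-ε * (a : ℤ)) with hw'
    have e : w + Pi.single (⟨0, hd⟩ : Fin d) (-ε * ((a+1 : ℕ) : ℤ)) =
        w' + Pi.single (⟨0, hd⟩ : Fin d) (-ε) := by
      rw [hw', add_assoc, ← Pi.single_add]
      push_cast
      ring_nf
    have hmem : (w' + Pi.single (⟨0, hd⟩ : Fin d) (-ε)) ∈ {w | ε * phi n m w ≤ B} := by
      have h1 := down_step_mono hd hε hnpos hm1 w'
      have h2 := ih.2
      simp only [Set.mem_setOf_eq] at *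
      omega
    have hadj : (latticeGraph d).Adj w' (w' + Pi.single (⟨0, hd⟩ : Fin d) (-ε)) :=
      adj_step _ _ (by rcases hε with rfl | rfl <;> simp) w'
    rw [e]
    exact ⟨ih.1.tail ⟨hadj, ih.2, hmem⟩, hmem⟩

lemma anchor_connected (hd : 0 < d) (hε : ε = 1 ∨ ε = -1) (hnpos : (0:ℤ) < n)
    (hm1 : 1 ≤ m ⟨0, hd⟩) (hmb : ∀ i, |m i| ≤ (n : ℤ)) :
    ∀ w ∈ {w | ε * phi n m w ≤ B}, ∀ z ∈ {w | ε * phi n m w ≤ B},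
      ReflTransGen (rel {w | ε * phi n m w ≤ B}) w z := by
  set S := {w | ε * phi n m w ≤ B} with hS
  suffices H : ∀ (L : ℕ) (w z : Fin d → ℤ), w ∈ S → z ∈ S →
      (∑ i ∈ Finset.univ.erase (⟨0, hd⟩ : Fin d), (z i - w i).natAbs) = L →
      ReflTransGen (rel S) w z from fun w hw z hz => H _ w z hw hz rfl
  intro L
  induction L using Nat.strong_induction_on with
  | _ L ih =>
    intro w z hw hz hL
    rcases Nat.eq_zero_or_pos L with rfl | hpos
    · -- same line through coordinate 0
      have hcoords : ∀ j, j ≠ (⟨0, hd⟩ : Fin d) → z j = w j := by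
        intro j hj
        have hj' : j ∈ Finset.univ.erase (⟨0, hd⟩ : Fin d) :=
          Finset.mem_erase.mpr ⟨hj, Finset.mem_univ j⟩
        have := Finset.sum_eq_zero_iff.mp hL j hj'
        omega
      have hz_eq : z = w + Pi.single (⟨0, hd⟩ : Fin d) (z ⟨0, hd⟩ - w ⟨0, hd⟩) := by
        funext j
        by_cases hj : j = (⟨0, hd⟩ : Fin d)
        · subst hj; simp
        · simp [Pi.single_eq_of_ne hj, hcoords j hj]
      have hw_eq : w = z + Pi.single (⟨0, hd⟩ : Fin d) (w ⟨0, hd⟩ - z ⟨0, hd⟩) := by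
        funext j
        by_cases hj : j = (⟨0, hd⟩ : Fin d)
        · subst hj; simp
        · simp [Pi.single_eq_of_ne hj, hcoords j hj]
      rcases hε with rfl | rfl
      · rcases le_or_gt (z ⟨0, hd⟩ - w ⟨0, hd⟩) 0 with hδ | hδ
        · have ha : z ⟨0, hd⟩ - w ⟨0, hd⟩ = -1 * (((w ⟨0, hd⟩ - z ⟨0, hd⟩).toNat : ℤ)) := by
            omega
          have := (line_reach hd (Or.inl rfl) hnpos hm1 (B := B) w hw
            (w ⟨0, hd⟩ - z ⟨0, hd⟩).toNat).1
          rwa [← ha, ← hz_eq] at this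
        · have ha : w ⟨0, hd⟩ - z ⟨0, hd⟩ = -1 * (((z ⟨0, hd⟩ - w ⟨0, hd⟩).toNat : ℤ)) := by
            omega
          have := (line_reach hd (Or.inl rfl) hnpos hm1 (B := B) z hz
            (z ⟨0, hd⟩ - w ⟨0, hd⟩).toNat).1
          rw [← ha, ← hw_eq] at this
          exact rtg_symm this
      · rcases le_or_gt (w ⟨0, hd⟩ - z ⟨0, hd⟩) 0 with hδ | hδ
        · have ha : z ⟨0, hd⟩ - w ⟨0, hd⟩ = -(-1) * (((z ⟨0, hd⟩ - w ⟨0, hd⟩).toNat : ℤ)) := by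
            omega
          have := (line_reach hd (Or.inr rfl) hnpos hm1 (B := B) w hw
            (z ⟨0, hd⟩ - w ⟨0, hd⟩).toNat).1
          rwa [← ha, ← hz_eq] at this
        · have ha : w ⟨0, hd⟩ - z ⟨0, hd⟩ = -(-1) * (((w ⟨0, hd⟩ - z ⟨0, hd⟩).toNat : ℤ)) := by
            omega
          have := (line_reach hd (Or.inr rfl) hnpos hm1 (B := B) z hz
            (w ⟨0, hd⟩ - z ⟨0, hd⟩).toNat).1
          rw [← ha, ← hw_eq] at this
          exact rtg_symm this
    · -- lateral step
      have hex : ∃ j ∈ Finset.univ.erase (⟨0, hd⟩ : Fin d), (z j - w j).natAbs ≠ 0 := by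
        by_contra hcon
        push_neg at hcon
        rw [Finset.sum_eq_zero (fun i hi => hcon i hi)] at hL
        omega
      obtain ⟨j, hjmem, hjne⟩ := hex
      have hji0 : j ≠ (⟨0, hd⟩ : Fin d) := (Finset.mem_erase.mp hjmem).1
      set σ : ℤ := if w j < z j then 1 else -1 with hσ
      have hline := line_reach hd hε hnpos hm1 (B := B) w hw (n * n)
      set w1 := w + Pi.single (⟨0, hd⟩ : Fin d) (-ε * ((n * n : ℕ) : ℤ)) with hw1
      have hw1S : w1 ∈ S := hline.2
      have hw1phi : ε * phi n m w1 ≤ B - (n : ℤ) := by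
        have hcast : ((n * n : ℕ) : ℤ) = (n:ℤ) * (n:ℤ) := by push_cast; ring
        have hdn := down_n2 hd hε hnpos (m := m) w
        rw [hcast] at hw1
        rw [hw1, hdn]
        have hnm : (n:ℤ) * 1 ≤ (n:ℤ) * m ⟨0, hd⟩ :=
          mul_le_mul_of_nonneg_left hm1 (by omega)
        have hwS : ε * phi n m w ≤ B := hw
        omega
      set w2 := w1 + Pi.single j σ with hw2
      have hσ1 : σ = 1 ∨ σ = -1 := by rw [hσ]; split <;> simp
      have hw2S : w2 ∈ S := by
        have hb := phi_step_bound hnpos hmb j hσ1 w1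
        rw [abs_le] at hb
        show ε * phi n m w2 ≤ B
        rw [hw2]
        rcases hε with rfl | rfl <;> omega
      have hadj12 : (latticeGraph d).Adj w1 w2 := adj_step j σ hσ1 w1
      have hsum2 : (∑ i ∈ Finset.univ.erase (⟨0, hd⟩ : Fin d), (z i - w2 i).natAbs) = L - 1 := by
        have hw2j : w2 j = w j + σ := by
          rw [hw2, hw1]
          simp [Pi.single_eq_of_ne hji0, Pi.single_eq_same]
        have hw2i : ∀ i, i ≠ j → i ≠ (⟨0, hd⟩ : Fin d) → w2 i = w i := by
          intro i hij hii0
          rw [hw2, hw1]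
          simp [Pi.single_eq_of_ne hij, Pi.single_eq_of_ne hii0]
        rw [← Finset.add_sum_erase _ (fun i => (z i - w2 i).natAbs) hjmem]
        rw [← Finset.add_sum_erase _ (fun i => (z i - w i).natAbs) hjmem] at hL
        have h1 : ∑ i ∈ (Finset.univ.erase (⟨0, hd⟩ : Fin d)).erase j, (z i - w2 i).natAbs =
            ∑ i ∈ (Finset.univ.erase (⟨0, hd⟩ : Fin d)).erase j, (z i - w i).natAbs :=
          Finset.sum_congr rfl (fun i hi => by
            rw [hw2i i (Finset.ne_of_mem_erase hi)
              (Finset.ne_of_mem_erase (Finset.mem_of_mem_erase hi))])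
        have h2 : (z j - w2 j).natAbs + 1 = (z j - w j).natAbs := by
          rw [hw2j]
          rcases lt_trichotomy (w j) (z j) with hc | hc | hc
          · rw [hσ, if_pos hc]; omega
          · omega
          · rw [hσ, if_neg (by omega)]; omega
        omega
      have hrest := ih (L - 1) (by omega) w2 z hw2S hz hsum2
      exact (hline.1.trans (.single ⟨hadj12, hw1S, hw2S⟩)).trans hrest

end Anchor

end P3CAux
namespace P3CAux
open P3C Relation

variable {d n : ℕ} {m : Fin d → ℤ} {h : (Fin d → ℤ) → ℤ}

/-! ### Translation covariance of sublevel structures -/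

lemma subLL_tr (hQP : ∀ (v : Fin d → ℤ) (i : Fin d), h (v + Pi.single i (n : ℤ)) = h v + m i)
    (hn0 : (n : ℤ) ≠ 0) {x : Fin d → ℤ} (hx : xdvd n x) (k : ℤ) (u : Fin d → ℤ) :
    tr x (subLL d h k u) = subLL d h (k + phi n m x) (u + x) := by
  have hset : tr x {w | h w ≠ k + 1} = {w | h w ≠ k + phi n m x + 1} := by
    ext w
    rw [mem_tr]
    simp only [Set.mem_setOf_eq]
    have hw : h w = h (w - x) + phi n m x := by
      have := h_add hQP hn0 hx (w - x)
      have e : w - x + x = w := by funext i; simp only [Pi.add_apply, Pi.sub_apply]; ring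
      rw [e] at this
      omega
    constructor <;> intro <;> omega
  show tr x (compIn (latticeGraph d) {w | h w ≠ k + 1} u) =
    compIn (latticeGraph d) {w | h w ≠ k + phi n m x + 1} (u + x)
  rw [← hset, compIn_tr]

lemma subLC_tr (hQP : ∀ (v : Fin d → ℤ) (i : Fin d), h (v + Pi.single i (n : ℤ)) = h v + m i)
    (hn0 : (n : ℤ) ≠ 0) {x : Fin d → ℤ} (hx : xdvd n x) (k : ℤ) (u v : Fin d → ℤ) :
    tr x (subLC d h k u v) = subLC d h (k + phi n m x) (u + x) (v + x) := by
  unfold subLC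
  rw [tr_compl]
  congr 1
  rw [← subLL_tr hQP hn0 hx, ← tr_compl, compIn_tr]

/-! ### Anchor sets inside sublevel components -/

lemma anchor_low_subset (hd : 0 < d) (hn2 : 2 ≤ n)
    (hQP : ∀ (v : Fin d → ℤ) (i : Fin d), h (v + Pi.single i (n : ℤ)) = h v + m i)
    (hm1 : 1 ≤ m ⟨0, hd⟩) (hmb : ∀ i, |m i| ≤ (n : ℤ)) (k : ℤ) (u : Fin d → ℤ)
    (hu_anchor : 1 * phi n m u ≤ k - MM n d h) :
    {w | 1 * phi n m w ≤ k - MM n d h} ⊆ subLL d h k u := by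
  have hnpos : (0:ℤ) < n := by positivity
  have hle : ∀ w ∈ {w | 1 * phi n m w ≤ k - MM n d h}, h w ≤ k := by
    intro w hw
    have := (residue_bounds hQP hn2 w).2
    simp only [Set.mem_setOf_eq, one_mul] at hw
    omega
  have hsub : {w | 1 * phi n m w ≤ k - MM n d h} ⊆ {w | h w ≠ k + 1} := by
    intro w hw
    have := hle w hw
    simp only [Set.mem_setOf_eq]
    omega
  intro w hw
  have hrtg := anchor_connected (B := k - MM n d h) hd (Or.inl rfl) hnpos hm1 hmb
    u hu_anchor w hw
  exact compIn_of_rtg (compIn_self (hsub hu_anchor)) (rtg_mono hsub hrtg)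

lemma anchor_high_subset (hd : 0 < d) (hn2 : 2 ≤ n)
    (hstep : IsLatticeHHF d h)
    (hQP : ∀ (v : Fin d → ℤ) (i : Fin d), h (v + Pi.single i (n : ℤ)) = h v + m i)
    (hm1 : 1 ≤ m ⟨0, hd⟩) (hmb : ∀ i, |m i| ≤ (n : ℤ)) (k : ℤ) (u v : Fin d → ℤ)
    (hu : h u ≤ k)
    (hv_anchor : (-1) * phi n m v ≤ mu n d h - k - 1) :
    {w | (-1) * phi n m w ≤ mu n d h - k - 1} ⊆
      compIn (latticeGraph d) (subLL d h k u)ᶜ v := by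
  have hnpos : (0:ℤ) < n := by positivity
  have hgt : ∀ w ∈ {w | (-1) * phi n m w ≤ mu n d h - k - 1}, k < h w := by
    intro w hw
    have := (residue_bounds hQP hn2 w).1
    simp only [Set.mem_setOf_eq] at hw
    omega
  have hsub : {w | (-1) * phi n m w ≤ mu n d h - k - 1} ⊆ (subLL d h k u)ᶜ := by
    intro w hw
    exact not_mem_subLL_of_gt hstep hu (hgt w hw)
  intro w hw
  have hrtg := anchor_connected (B := mu n d h - k - 1) hd (Or.inr rfl) hnpos hm1 hmb
    v hv_anchor w hw
  exact compIn_of_rtg (compIn_self (hsub hv_anchor)) (rtg_mono hsub hrtg)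

/-! ### Connectivity helper -/

lemma connectedIn_of {S : Set (Fin d → ℤ)} (hne : S.Nonempty)
    (H : ∀ a ∈ S, ∀ b ∈ S, ReflTransGen (rel S) a b) :
    ConnectedIn (latticeGraph d) S := by
  rw [ConnectedIn, SimpleGraph.connected_iff]
  refine ⟨fun x y => ?_, ⟨⟨hne.choose, hne.choose_spec⟩⟩⟩
  exact reachable_of_rtg x.2 (H x.1 x.2 y.1 y.2) y.2

/-! ### Bi-connectivity of sublevel components -/

lemma subLL_subset_subLC {k : ℤ} {u v : Fin d → ℤ} :
    subLL d h k u ⊆ subLC d h k u v :=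
  fun _ hw hK => (compIn_subset hK) hw

lemma biconnected_subLC (hstep : IsLatticeHHF d h) {k : ℤ} {u v : Fin d → ℤ}
    (hu : h u ≤ k) (hv : k < h v) :
    BiConnected d (subLC d h k u v) := by
  have huLL : u ∈ subLL d h k u := u_mem_subLL hu
  have huA : u ∈ subLC d h k u v := subLL_subset_subLC huLL
  have hvK : v ∈ compIn (latticeGraph d) (subLL d h k u)ᶜ v := v_mem_K hstep hu hv
  have hub : ∀ w ∈ subLC d h k u v, ReflTransGen (rel (subLC d h k u v)) w u := by
    intro w hw
    by_cases hwLL : w ∈ subLL d h k u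
    · have := rtg_in_compIn (S := {w | h w ≠ k + 1}) hwLL
      exact rtg_symm (rtg_mono subLL_subset_subLC this)
    · have hwC : w ∈ compIn (latticeGraph d) (subLL d h k u)ᶜ w := compIn_self hwLL
      have hCA : compIn (latticeGraph d) (subLL d h k u)ᶜ w ⊆ subLC d h k u v := by
        intro t ht hK
        have h1 := compIn_eq_of_mem ht
        have h2 := compIn_eq_of_mem hK
        rw [h2] at h1
        exact hw (h1 ▸ hwC)
      have huC : u ∉ compIn (latticeGraph d) (subLL d h k u)ᶜ w :=
        fun hc => (compIn_subset hc) huLL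
      obtain ⟨p, q, hpq, hpC, hqC⟩ := first_cross (lattice_rtg w u) hwC huC
      have hqLL : q ∈ subLL d h k u := by
        by_contra hq
        exact hqC (compIn_absorb hpC hpq hq)
      have hwp : ReflTransGen (rel (subLC d h k u v)) w p :=
        rtg_mono hCA (rtg_in_compIn hpC)
      have hqu : ReflTransGen (rel (subLC d h k u v)) q u :=
        rtg_symm (rtg_mono subLL_subset_subLC
          (rtg_in_compIn (S := {w | h w ≠ k + 1}) hqLL))
      exact (hwp.tail ⟨hpq, hCA hpC, subLL_subset_subLC hqLL⟩).trans hqu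
  refine ⟨?_, ?_, ?_, ?_⟩
  · exact fun hA => by rw [hA] at huA; exact huA
  · intro hA
    have : v ∈ subLC d h k u v := hA ▸ Set.mem_univ v
    exact this hvK
  · exact connectedIn_of ⟨u, huA⟩
      (fun a ha b hb => (hub a ha).trans (rtg_symm (hub b hb)))
  · rw [show (subLC d h k u v)ᶜ = compIn (latticeGraph d) (subLL d h k u)ᶜ v from
      compl_compl _]
    refine connectedIn_of ⟨v, hvK⟩ (fun a ha b hb => ?_)
    exact (rtg_symm (rtg_in_compIn ha)).trans (rtg_in_compIn hb)

end P3CAux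
namespace P3CAux
open P3C Relation

variable {d n : ℕ} {m : Fin d → ℤ} {h : (Fin d → ℤ) → ℤ}

noncomputable def ustar (n d : ℕ) (h : (Fin d → ℤ) → ℤ) (hd : 0 < d) : Fin d → ℤ :=
  Pi.single ⟨0, hd⟩ ((n:ℤ) * (-((MM n d h).natAbs : ℤ) - 1))

noncomputable def vstar (n d : ℕ) (h : (Fin d → ℤ) → ℤ) (hd : 0 < d) : Fin d → ℤ :=
  Pi.single ⟨0, hd⟩ ((n:ℤ) * (((mu n d h).natAbs : ℤ) + 1))

/-- The family of sublevel components under consideration. -/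
noncomputable def Afam (n d : ℕ) (m : Fin d → ℤ) (h : (Fin d → ℤ) → ℤ) (hd : 0 < d)
    (x : Fin d → ℤ) : Set (Fin d → ℤ) :=
  subLC d h (phi n m x) (ustar n d h hd + x) (vstar n d h hd + x)

lemma mem_Afam_iff {hd : 0 < d} {x w : Fin d → ℤ} :
    w ∈ Afam n d m h hd x ↔
      w ∉ compIn (latticeGraph d) (subLL d h (phi n m x) (ustar n d h hd + x))ᶜ
        (vstar n d h hd + x) := Iff.rfl

section Family

variable (hd : 0 < d) (hn2 : 2 ≤ n) (hstep : IsLatticeHHF d h)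
variable (hQP : ∀ (v : Fin d → ℤ) (i : Fin d), h (v + Pi.single i (n : ℤ)) = h v + m i)
variable (hm1 : 1 ≤ m ⟨0, hd⟩) (hmb : ∀ i, |m i| ≤ (n : ℤ))

include hn2 hm1 in
lemma phi_ustar : phi n m (ustar n d h hd) + MM n d h ≤ 0 := by
  have hn0 : (n:ℤ) ≠ 0 := by positivity
  rw [ustar, phi_single hd hn0]
  have h1 : m ⟨0, hd⟩ * (-((MM n d h).natAbs : ℤ) - 1) ≤
      1 * (-((MM n d h).natAbs : ℤ) - 1) :=
    mul_le_mul_of_nonpos_right hm1 (by omega)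
  have h2 : MM n d h ≤ ((MM n d h).natAbs : ℤ) := Int.le_natAbs
  omega

include hn2 hm1 in
lemma phi_vstar : 1 ≤ mu n d h + phi n m (vstar n d h hd) := by
  have hn0 : (n:ℤ) ≠ 0 := by positivity
  rw [vstar, phi_single hd hn0]
  have h1 : 1 * (((mu n d h).natAbs : ℤ) + 1) ≤
      m ⟨0, hd⟩ * (((mu n d h).natAbs : ℤ) + 1) :=
    mul_le_mul_of_nonneg_right hm1 (by omega)
  have h2 : -((mu n d h).natAbs : ℤ) ≤ mu n d h := by
    have := Int.le_natAbs (a := -(mu n d h))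
    omega
  omega

include hn2 hQP hm1 in
lemma h_ustar_le {x : Fin d → ℤ} (hx : xdvd n x) :
    h (ustar n d h hd + x) ≤ phi n m x := by
  have hn0 : (n:ℤ) ≠ 0 := by positivity
  have h1 := h_add hQP hn0 hx (ustar n d h hd)
  have h2 := (residue_bounds hQP hn2 (ustar n d h hd)).2
  have h3 := phi_ustar (h := h) hd hn2 hm1
  omega

include hn2 hQP hm1 in
lemma h_vstar_gt {x : Fin d → ℤ} (hx : xdvd n x) :
    phi n m x < h (vstar n d h hd + x) := by
  have hn0 : (n:ℤ) ≠ 0 := by positivity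
  have h1 := h_add hQP hn0 hx (vstar n d h hd)
  have h2 := (residue_bounds hQP hn2 (vstar n d h hd)).1
  have h3 := phi_vstar (h := h) hd hn2 hm1
  omega

include hn2 hQP hm1 hmb in
lemma low_anchor_fam {x : Fin d → ℤ} (hx : xdvd n x) :
    {w | 1 * phi n m w ≤ phi n m x - MM n d h} ⊆
      subLL d h (phi n m x) (ustar n d h hd + x) := by
  have hn0 : (n:ℤ) ≠ 0 := by positivity
  refine anchor_low_subset hd hn2 hQP hm1 hmb _ _ ?_
  have h1 := phi_add (m := m) hn0 hx (ustar n d h hd)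
  have h2 := phi_ustar (h := h) hd hn2 hm1
  rw [one_mul, h1]
  omega

include hn2 hstep hQP hm1 hmb in
lemma high_anchor_fam {x : Fin d → ℤ} (hx : xdvd n x) :
    {w | (-1) * phi n m w ≤ mu n d h - phi n m x - 1} ⊆
      compIn (latticeGraph d) (subLL d h (phi n m x) (ustar n d h hd + x))ᶜ
        (vstar n d h hd + x) := by
  have hn0 : (n:ℤ) ≠ 0 := by positivity
  refine anchor_high_subset hd hn2 hstep hQP hm1 hmb _ _ _
    (h_ustar_le hd hn2 hQP hm1 hx) ?_
  have h1 := phi_add (m := m) hn0 hx (vstar n d h hd)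
  have h2 := phi_vstar (h := h) hd hn2 hm1
  rw [h1]
  omega

include hn2 hstep hQP hm1 hmb in
lemma fam_order {x1 x2 : Fin d → ℤ} (hx1 : xdvd n x1) (hx2 : xdvd n x2)
    (hphile : phi n m x1 ≤ phi n m x2) :
    Afam n d m h hd x1 ⊆ Afam n d m h hd x2 := by
  have hn0 : (n:ℤ) ≠ 0 := by positivity
  set k1 := phi n m x1
  set k2 := phi n m x2
  set LL1 := subLL d h k1 (ustar n d h hd + x1) with hLL1
  set LL2 := subLL d h k2 (ustar n d h hd + x2) with hLL2
  set K1 := compIn (latticeGraph d) LL1ᶜ (vstar n d h hd + x1) with hK1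
  set K2 := compIn (latticeGraph d) LL2ᶜ (vstar n d h hd + x2) with hK2
  -- deep points
  set tP : ℤ := (k2.natAbs : ℤ) + ((mu n d h).natAbs : ℤ) + 1 with htP
  set zplus : Fin d → ℤ := Pi.single (⟨0, hd⟩ : Fin d) ((n:ℤ) * tP) with hzplus
  have hphiz : phi n m zplus = m ⟨0, hd⟩ * tP := phi_single hd hn0 tP
  have hmtP : tP ≤ m ⟨0, hd⟩ * tP := le_mul_of_one_le_left (by omega) hm1
  have hzK1 : zplus ∈ K1 := high_anchor_fam hd hn2 hstep hQP hm1 hmb hx1 (by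
    simp only [Set.mem_setOf_eq, hphiz]
    have b1 : k1 ≤ (k2.natAbs : ℤ) := le_trans hphile Int.le_natAbs
    have b2 : -((mu n d h).natAbs : ℤ) ≤ mu n d h := by
      have := Int.le_natAbs (a := -(mu n d h)); omega
    omega)
  have hzK2 : zplus ∈ K2 := high_anchor_fam hd hn2 hstep hQP hm1 hmb hx2 (by
    simp only [Set.mem_setOf_eq, hphiz]
    have b1 : k2 ≤ (k2.natAbs : ℤ) := Int.le_natAbs
    have b2 : -((mu n d h).natAbs : ℤ) ≤ mu n d h := by
      have := Int.le_natAbs (a := -(mu n d h)); omega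
    omega)
  set tM : ℤ := -(k1.natAbs : ℤ) - ((MM n d h).natAbs : ℤ) - 1 with htM
  set zminus : Fin d → ℤ := Pi.single (⟨0, hd⟩ : Fin d) ((n:ℤ) * tM) with hzminus
  have hphizm : phi n m zminus = m ⟨0, hd⟩ * tM := phi_single hd hn0 tM
  have hmtM : m ⟨0, hd⟩ * tM ≤ tM := by
    have := mul_le_mul_of_nonpos_right hm1 (c := tM) (by omega)
    omega
  have hzmLL1 : zminus ∈ LL1 := low_anchor_fam hd hn2 hQP hm1 hmb hx1 (by
    simp only [Set.mem_setOf_eq, one_mul, hphizm]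
    have b1 : -(k1.natAbs : ℤ) ≤ k1 := by
      have := Int.le_natAbs (a := -k1); omega
    have b2 : MM n d h ≤ ((MM n d h).natAbs : ℤ) := Int.le_natAbs
    omega)
  have hzmLL2 : zminus ∈ LL2 := low_anchor_fam hd hn2 hQP hm1 hmb hx2 (by
    simp only [Set.mem_setOf_eq, one_mul, hphizm]
    have b1 : -(k1.natAbs : ℤ) ≤ k1 := by
      have := Int.le_natAbs (a := -k1); omega
    have b2 : MM n d h ≤ ((MM n d h).natAbs : ℤ) := Int.le_natAbs
    omega)
  have hzmA2 : zminus ∈ Afam n d m h hd x2 := subLL_subset_subLC hzmLL2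
  -- K2 is disjoint from LL1
  have hK2LL1 : ∀ q ∈ K2, q ∉ LL1 := by
    intro q0 hq0K2 hq0LL1
    have hchain : ReflTransGen (rel LL1) zminus q0 :=
      (rtg_symm (rtg_in_compIn hzmLL1)).trans (rtg_in_compIn hq0LL1)
    have hq0nA2 : q0 ∉ Afam n d m h hd x2 := by
      rw [mem_Afam_iff]
      exact not_not.mpr hq0K2
    obtain ⟨p, q, hpq, hpA2, hqA2⟩ := first_cross hchain hzmA2 hq0nA2
    have hqK2 : q ∈ K2 := not_not.mp hqA2
    have hpack := bdry_pack hstep (h_ustar_le hd hn2 hQP hm1 hx2)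
      (h_vstar_gt hd hn2 hQP hm1 hx2) hpq.1 hpA2 hqK2
    have hqLL1 : q ∈ LL1 := hpq.2.2
    have hqle : h q ≤ k1 := subLL_height_le hstep (h_ustar_le hd hn2 hQP hm1 hx1) hqLL1
    omega
  -- conclude
  intro w hw
  rw [mem_Afam_iff]
  intro hwK2
  refine hw ?_
  have hchain : ReflTransGen (rel K2) zplus w :=
    (rtg_symm (rtg_in_compIn hzK2)).trans (rtg_in_compIn hwK2)
  have hchain' : ReflTransGen (rel LL1ᶜ) zplus w :=
    rtg_mono (fun t ht => hK2LL1 t ht) hchain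
  exact compIn_of_rtg hzK1 hchain'

include hn2 hstep hQP hm1 hmb in
lemma fam_eq_of_touch {x1 x2 : Fin d → ℤ} (hx1 : xdvd n x1) (hx2 : xdvd n x2)
    (hk : phi n m x1 = phi n m x2) {a b : Fin d → ℤ}
    (haLL1 : a ∈ subLL d h (phi n m x1) (ustar n d h hd + x1))
    (haLL2 : a ∈ subLL d h (phi n m x2) (ustar n d h hd + x2))
    (hbK1 : b ∈ compIn (latticeGraph d)
      (subLL d h (phi n m x1) (ustar n d h hd + x1))ᶜ (vstar n d h hd + x1))
    (hbK2 : b ∈ compIn (latticeGraph d)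
      (subLL d h (phi n m x2) (ustar n d h hd + x2))ᶜ (vstar n d h hd + x2)) :
    Afam n d m h hd x1 = Afam n d m h hd x2 := by
  have hLLeq : subLL d h (phi n m x1) (ustar n d h hd + x1) =
      subLL d h (phi n m x2) (ustar n d h hd + x2) := by
    have h1 := compIn_eq_of_mem (S := {w | h w ≠ phi n m x1 + 1}) haLL1
    have h2 := compIn_eq_of_mem (S := {w | h w ≠ phi n m x2 + 1}) haLL2
    rw [hk] at h1
    rw [subLL, subLL, hk, ← h1, ← h2]
  have hKeq : compIn (latticeGraph d)
      (subLL d h (phi n m x1) (ustar n d h hd + x1))ᶜ (vstar n d h hd + x1) =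
      compIn (latticeGraph d)
      (subLL d h (phi n m x2) (ustar n d h hd + x2))ᶜ (vstar n d h hd + x2) := by
    have h1 := compIn_eq_of_mem hbK1
    have h2 := compIn_eq_of_mem hbK2
    rw [hLLeq] at h1
    rw [hLLeq, ← h1, ← h2]
  rw [Afam, Afam, subLC, subLC, hKeq]

include hn2 hstep hQP hm1 hmb in
lemma fam_bd {x1 x2 : Fin d → ℤ} (hx1 : xdvd n x1) (hx2 : xdvd n x2)
    (hne : Afam n d m h hd x1 ≠ Afam n d m h hd x2) :
    BoundaryDisjoint d (Afam n d m h hd x1) (Afam n d m h hd x2) := by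
  have hu1 := h_ustar_le hd hn2 hQP hm1 hx1
  have hu2 := h_ustar_le hd hn2 hQP hm1 hx2
  have hv1 := h_vstar_gt hd hn2 hQP hm1 hx1
  have hv2 := h_vstar_gt hd hn2 hQP hm1 hx2
  constructor
  · rw [Set.eq_empty_iff_forall_notMem]
    rintro ⟨e1, e2⟩ ⟨⟨hadj1, hcase1⟩, ⟨hadj2, hcase2⟩⟩
    simp only at hcase1 hcase2 hadj1 hadj2
    rcases hcase1 with ⟨hp1, hq1⟩ | ⟨hp1, hq1⟩ <;>
      rcases hcase2 with ⟨hp2, hq2⟩ | ⟨hp2, hq2⟩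
    · have pk1 := bdry_pack hstep hu1 hv1 hadj1 hp1 (not_not.mp hq1)
      have pk2 := bdry_pack hstep hu2 hv2 hadj2 hp2 (not_not.mp hq2)
      have hk : phi n m x1 = phi n m x2 := by omega
      exact hne (fam_eq_of_touch hd hn2 hstep hQP hm1 hmb hx1 hx2 hk pk1.1 pk2.1
        (not_not.mp hq1) (not_not.mp hq2))
    · have pk1 := bdry_pack hstep hu1 hv1 hadj1 hp1 (not_not.mp hq1)
      have pk2 := bdry_pack hstep hu2 hv2 hadj2.symm hp2 (not_not.mp hq2)
      omega
    · have pk1 := bdry_pack hstep hu1 hv1 hadj1.symm hp1 (not_not.mp hq1)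
      have pk2 := bdry_pack hstep hu2 hv2 hadj2 hp2 (not_not.mp hq2)
      omega
    · have pk1 := bdry_pack hstep hu1 hv1 hadj1.symm hp1 (not_not.mp hq1)
      have pk2 := bdry_pack hstep hu2 hv2 hadj2.symm hp2 (not_not.mp hq2)
      have hk : phi n m x1 = phi n m x2 := by omega
      exact hne (fam_eq_of_touch hd hn2 hstep hQP hm1 hmb hx1 hx2 hk pk1.1 pk2.1
        (not_not.mp hq1) (not_not.mp hq2))
  · rintro ⟨v00, v01, v11, v10, ⟨hc1, hc2, hc3, hc4, _, _⟩,
      ⟨h00a, h00b⟩, ⟨h01a, h01b⟩, ⟨h11a, h11b⟩, ⟨h10a, h10b⟩⟩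
    have pk1 := bdry_pack hstep hu1 hv1 hc2.symm h11a (not_not.mp h01a)
    have pk2 := bdry_pack hstep hu2 hv2 hc3 h11b (not_not.mp h10b)
    have hk : phi n m x1 = phi n m x2 := by omega
    exact hne (fam_eq_of_touch hd hn2 hstep hQP hm1 hmb hx1 hx2 hk pk1.1 pk2.1
      (not_not.mp h00a) (not_not.mp h00b))

include hn2 hstep hQP hm1 hmb in
lemma fam_level_eq {x1 x2 : Fin d → ℤ} (hx1 : xdvd n x1) (hx2 : xdvd n x2)
    (heq : Afam n d m h hd x1 = Afam n d m h hd x2) :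
    phi n m x1 = phi n m x2 := by
  have hu1 := h_ustar_le hd hn2 hQP hm1 hx1
  have hu2 := h_ustar_le hd hn2 hQP hm1 hx2
  have hv1 := h_vstar_gt hd hn2 hQP hm1 hx1
  have hv2 := h_vstar_gt hd hn2 hQP hm1 hx2
  have huA : (ustar n d h hd + x1) ∈ Afam n d m h hd x1 :=
    subLL_subset_subLC (u_mem_subLL hu1)
  have hvK : (vstar n d h hd + x1) ∉ Afam n d m h hd x1 :=
    not_not.mpr (v_mem_K hstep hu1 hv1)
  obtain ⟨p, q, hpq, hpA, hqA⟩ :=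
    first_cross (lattice_rtg (ustar n d h hd + x1) (vstar n d h hd + x1)) huA hvK
  have pk1 := bdry_pack hstep hu1 hv1 hpq hpA (not_not.mp hqA)
  have hpA2 : p ∈ Afam n d m h hd x2 := heq ▸ hpA
  have hqA2 : q ∉ Afam n d m h hd x2 := heq ▸ hqA
  have pk2 := bdry_pack hstep hu2 hv2 hpq hpA2 (not_not.mp hqA2)
  omega

end Family

end P3CAux
namespace P3CAux
open P3C Relation

variable {d n : ℕ} {m : Fin d → ℤ} {h : (Fin d → ℤ) → ℤ}

lemma Afam_def {hd : 0 < d} (x : Fin d → ℤ) :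
    Afam n d m h hd x =
      subLC d h (phi n m x) (ustar n d h hd + x) (vstar n d h hd + x) := rfl

lemma tr_eq_image (x : Fin d → ℤ) (U : Set (Fin d → ℤ)) :
    (fun u => u + x) '' U = tr x U := rfl

lemma Afam_tr (hd : 0 < d)
    (hQP : ∀ (v : Fin d → ℤ) (i : Fin d), h (v + Pi.single i (n : ℤ)) = h v + m i)
    (hn0 : (n : ℤ) ≠ 0) {x y : Fin d → ℤ} (hx : xdvd n x) (hy : xdvd n y) :
    tr y (Afam n d m h hd x) = Afam n d m h hd (x + y) := by
  rw [Afam_def, Afam_def, subLC_tr hQP hn0 hy]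
  rw [phi_add (m := m) hn0 hy x, add_assoc, add_assoc]

end P3CAux

theorem stmt18 (n d : ℕ) (hn : Even n) (hn2 : 2 ≤ n) (hd : 0 < d)
    (m : Fin d → ℤ) (hm : 0 < m ⟨0, hd⟩)
    (h : (Fin d → ℤ) → ℤ) (hh : P3C.IsQP n d m h) :
    ∃ A : Set (Fin d → ℤ), P3C.IsSublevelComponent d h A ∧
      (0 : Fin d → ℤ) ∈ A ∧ (Pi.single (⟨0, hd⟩ : Fin d) (n : ℤ)) ∉ A ∧
      P3C.TypeZero n d A := by
  classical
  open P3CAux in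
  obtain ⟨⟨hstep, h0⟩, hQP⟩ := hh
  have hm1 : 1 ≤ m ⟨0, hd⟩ := hm
  have hmb : ∀ i, |m i| ≤ (n : ℤ) := P3CAux.abs_m_le hstep hQP
  have hn0 : (n : ℤ) ≠ 0 := by positivity
  -- the one-parameter subfamily of translates along e₁
  set xj : ℤ → (Fin d → ℤ) := fun j => Pi.single (⟨0, hd⟩ : Fin d) ((n : ℤ) * j) with hxj
  have hxjdvd : ∀ j, xdvd n (xj j) := by
    intro j i
    by_cases hi : i = (⟨0, hd⟩ : Fin d)
    · subst hi; simp only [hxj, Pi.single_eq_same]; exact ⟨j, rfl⟩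
    · simp only [hxj, Pi.single_eq_of_ne hi]; exact dvd_zero _
  have hxjadd : ∀ a b : ℤ, xj a + xj b = xj (a + b) := by
    intro a b
    simp only [hxj]
    rw [← Pi.single_add]
    congr 1
    ring
  have hphixj : ∀ j, phi n m (xj j) = m ⟨0, hd⟩ * j := fun j => phi_single hd hn0 j
  -- the predicate "0 belongs to the j-th member"
  set P : ℤ → Prop := fun j => (0 : Fin d → ℤ) ∈ Afam n d m h hd (xj j) with hP
  have hphi0 : phi n m (0 : Fin d → ℤ) = 0 := phi_zero
  -- P holds for large j
  have hPbig : P ((MM n d h).natAbs : ℤ) := by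
    refine subLL_subset_subLC (low_anchor_fam hd hn2 hQP hm1 hmb
      (hxjdvd _) ?_)
    simp only [Set.mem_setOf_eq, hphi0, hphixj, mul_zero, one_mul]
    have h1 : ((MM n d h).natAbs : ℤ) ≤ m ⟨0, hd⟩ * ((MM n d h).natAbs : ℤ) :=
      le_mul_of_one_le_left (by omega) hm1
    have h2 : MM n d h ≤ ((MM n d h).natAbs : ℤ) := Int.le_natAbs
    omega
  -- P fails for small j
  have hPbdd : ∀ j : ℤ, P j → -(((mu n d h).natAbs : ℤ)) ≤ j := by
    intro j hPj
    by_contra hcon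
    push_neg at hcon
    refine hPj (high_anchor_fam hd hn2 hstep hQP hm1 hmb (hxjdvd j) ?_)
    simp only [Set.mem_setOf_eq, hphi0, hphixj, mul_zero]
    have h1 : m ⟨0, hd⟩ * j ≤ 1 * j :=
      mul_le_mul_of_nonpos_right hm1 (by omega)
    have h2 : -(((mu n d h).natAbs : ℤ)) ≤ mu n d h := by
      have := Int.le_natAbs (a := -(mu n d h)); omega
    omega
  obtain ⟨jm, hjm, hleast⟩ := Int.exists_least_of_bdd
    ⟨-(((mu n d h).natAbs : ℤ)), fun z hz => hPbdd z hz⟩ ⟨_, hPbig⟩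
  refine ⟨Afam n d m h hd (xj jm), ?_, hjm, ?_, ?_⟩
  · exact ⟨ustar n d h hd + xj jm, vstar n d h hd + xj jm, phi n m (xj jm),
      h_ustar_le hd hn2 hQP hm1 (hxjdvd jm),
      h_vstar_gt hd hn2 hQP hm1 (hxjdvd jm), rfl⟩
  · -- n·e₁ is not in the component
    have hsplit : Afam n d m h hd (xj jm) = tr (xj 1) (Afam n d m h hd (xj (jm - 1))) := by
      rw [Afam_tr hd hQP hn0 (hxjdvd (jm - 1)) (hxjdvd 1), hxjadd]
      congr 1
      ring
    rw [hsplit, mem_tr]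
    have hpt : Pi.single (⟨0, hd⟩ : Fin d) ((n : ℤ)) - xj 1 = 0 := by
      simp only [hxj, mul_one, sub_self]
    rw [hpt]
    intro h0mem
    have := hleast (jm - 1) h0mem
    omega
  · -- TypeZero
    have hmemtr : ∀ W, W ∈ P3C.translates n d (Afam n d m h hd (xj jm)) ↔
        ∃ y, xdvd n y ∧ W = Afam n d m h hd y := by
      intro W
      constructor
      · rintro ⟨x, hxdvd, rfl⟩
        refine ⟨xj jm + x, fun i => dvd_add (hxjdvd jm i) (hxdvd i), ?_⟩
        rw [tr_eq_image, Afam_tr hd hQP hn0 (hxjdvd jm) hxdvd]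
      · rintro ⟨y, hy, rfl⟩
        have hzdvd : xdvd n (y - xj jm) := fun i =>
          dvd_sub (hy i) (hxjdvd jm i)
        refine ⟨y - xj jm, hzdvd, ?_⟩
        rw [tr_eq_image, Afam_tr hd hQP hn0 (hxjdvd jm) hzdvd]
        have heq : xj jm + (y - xj jm) = y := by
          funext i
          simp only [Pi.add_apply, Pi.sub_apply]
          ring
        rw [heq]
    refine ⟨⟨?_, ?_⟩, ?_, ?_⟩
    · exact biconnected_subLC hstep (h_ustar_le hd hn2 hQP hm1 (hxjdvd jm))
        (h_vstar_gt hd hn2 hQP hm1 (hxjdvd jm))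
    · intro U1 hU1 U2 hU2 hne
      obtain ⟨y1, hy1, rfl⟩ := (hmemtr U1).mp hU1
      obtain ⟨y2, hy2, rfl⟩ := (hmemtr U2).mp hU2
      exact fam_bd hd hn2 hstep hQP hm1 hmb hy1 hy2 hne
    · refine ⟨Afam n d m h hd (xj jm), (hmemtr _).mpr ⟨xj jm, hxjdvd jm, rfl⟩,
        Afam n d m h hd (xj (jm + 1)), (hmemtr _).mpr ⟨xj (jm + 1), hxjdvd _, rfl⟩, ?_⟩
      intro heq
      have hlev := fam_level_eq hd hn2 hstep hQP hm1 hmb (hxjdvd jm) (hxjdvd (jm + 1)) heq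
      rw [hphixj, hphixj, mul_add, mul_one] at hlev
      omega
    · intro A1 hA1 B hB
      obtain ⟨y1, hy1, rfl⟩ := (hmemtr A1).mp hA1
      obtain ⟨y2, hy2, rfl⟩ := (hmemtr B).mp hB
      rcases le_total (phi n m y1) (phi n m y2) with hle | hle
      · exact Or.inl (fam_order hd hn2 hstep hQP hm1 hmb hy1 hy2 hle)
      · exact Or.inr (fam_order hd hn2 hstep hQP hm1 hmb hy2 hy1 hle)
end
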